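/- arXiv:2001.03262 — 9 statements merged into one kernel-verified Lean document; each statement's English description precedes it below -/
import Mathlib

section
/- Let f ∈ ℝ[x₁,…,xₙ] be a gem regular polynomial satisfying conditions (C1), (C2) and (C3). Then for any sequence of points (xᵏ)_{k∈ℕ} in ℝⁿ with ‖xᵏ‖ → +∞ there exists some ε > 0 such that f(xᵏ) ≥ ε·f^{V(f)}(xᵏ) holds for almost all k ∈ ℕ, where f^{V(f)}(x) := Σ_{α∈V(f)} f_α x^α. -/
open MvPolynomial Filter

noncomputable section

open scoped Classical

/-- The embedding of exponent vectors into `ℝⁿ`. -/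
def expEmbed {n : ℕ} (α : Fin n →₀ ℕ) : Fin n → ℝ := fun i => (α i : ℝ)

/-- The Newton polytope at infinity `New∞(f) = conv(A(f) ∪ {0})`. -/
def newtonInfty {n : ℕ} (f : MvPolynomial (Fin n) ℝ) : Set (Fin n → ℝ) :=
  convexHull ℝ (expEmbed '' ((insert 0 f.support : Finset (Fin n →₀ ℕ)) : Set (Fin n →₀ ℕ)))

/-- The vertex set `V₀(f)` of the Newton polytope at infinity, as a
finset of exponent vectors. -/
def V0 {n : ℕ} (f : MvPolynomial (Fin n) ℝ) : Finset (Fin n →₀ ℕ) :=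
  (insert 0 f.support).filter fun α => expEmbed α ∈ Set.extremePoints ℝ (newtonInfty f)

/-- The set `V(f) = V₀(f) \ {0}` of vertices at infinity. -/
def Vinf {n : ℕ} (f : MvPolynomial (Fin n) ℝ) : Finset (Fin n →₀ ℕ) := (V0 f).erase 0

/-- An exponent vector with all entries even, i.e. a member of `(2ℕ₀)ⁿ`. -/
def IsEvenExp {n : ℕ} (α : Fin n →₀ ℕ) : Prop := ∀ i, Even (α i)

/-- Condition (C1): `V(f) ⊆ (2ℕ₀)ⁿ`. -/
def CondC1 {n : ℕ} (f : MvPolynomial (Fin n) ℝ) : Prop := ∀ α ∈ Vinf f, IsEvenExp α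

/-- Condition (C2): positive coefficients at all vertices at infinity. -/
def CondC2 {n : ℕ} (f : MvPolynomial (Fin n) ℝ) : Prop := ∀ α ∈ Vinf f, 0 < f.coeff α

/-- Condition (C3): `V(f)` contains a vector `2 kᵢ eᵢ` for every `i`. -/
def CondC3 {n : ℕ} (f : MvPolynomial (Fin n) ℝ) : Prop :=
  ∀ i : Fin n, ∃ k : ℕ, 0 < k ∧ Finsupp.single i (2 * k) ∈ Vinf f

/-- An exponent vector of `f` is gem degenerate if it is no vertex at infinity but lies in
some nonempty face of `New∞(f)` not containing the origin. -/
def IsGemDegenerate {n : ℕ} (f : MvPolynomial (Fin n) ℝ) (α : Fin n →₀ ℕ) : Prop :=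
  α ∈ f.support ∧ α ∉ Vinf f ∧
    ∃ G : Set (Fin n → ℝ), G.Nonempty ∧ IsExtreme ℝ (newtonInfty f) G ∧
      (0 : Fin n → ℝ) ∉ G ∧ expEmbed α ∈ G

/-- The set `D(f)` of gem degenerate exponent vectors of `f`. -/
def Dfin {n : ℕ} (f : MvPolynomial (Fin n) ℝ) : Finset (Fin n →₀ ℕ) :=
  f.support.filter fun α => IsGemDegenerate f α

/-- `f` is gem regular if `D(f) = ∅`. -/
def GemRegular {n : ℕ} (f : MvPolynomial (Fin n) ℝ) : Prop := ∀ α, ¬ IsGemDegenerate f α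

/-- `V₀ᶜ(f) = A(f) \ V₀(f)`. -/
def V0c {n : ℕ} (f : MvPolynomial (Fin n) ℝ) : Finset (Fin n →₀ ℕ) := f.support \ V0 f

/-- A map of minimal barycentric coordinates of `f`. -/
def IsMinBary {n : ℕ} (f : MvPolynomial (Fin n) ℝ)
    (lam : (Fin n →₀ ℕ) → (Fin n →₀ ℕ) → ℝ) : Prop :=
  (∀ αs α, 0 ≤ lam αs α ∧ lam αs α ≤ 1) ∧
  ∀ αs ∈ V0c f, ∃ W : Finset (Fin n →₀ ℕ), W ⊆ V0 f ∧
    AffineIndependent ℝ (fun w : W => expEmbed (w : Fin n →₀ ℕ)) ∧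
    (∀ α ∈ W, 0 < lam αs α) ∧
    (∀ α ∈ V0 f, α ∉ W → lam αs α = 0) ∧
    (∑ α ∈ W, lam αs α) = 1 ∧
    (∑ α ∈ W, lam αs α • expEmbed α) = expEmbed αs

/-- `W_{α*}(λ_f)`, the minimal vertex representation of `α*` corresponding to `λ_f`. -/
def Wfin {n : ℕ} (f : MvPolynomial (Fin n) ℝ)
    (lam : (Fin n →₀ ℕ) → (Fin n →₀ ℕ) → ℝ) (αs : Fin n →₀ ℕ) : Finset (Fin n →₀ ℕ) :=
  (V0 f).filter fun α => 0 < lam αs α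

/-- The circuit number `Θ(f, λ_f, α*)`. -/
def circuitNumber {n : ℕ} (f : MvPolynomial (Fin n) ℝ)
    (lam : (Fin n →₀ ℕ) → (Fin n →₀ ℕ) → ℝ) (αs : Fin n →₀ ℕ) : ℝ :=
  ∏ α ∈ Wfin f lam αs, (f.coeff α / lam αs α) ^ (lam αs α)

/-- `g` is coercive on `ℝⁿ`: `g(x) → +∞` whenever `‖x‖ → +∞`. -/
def Coercive {n : ℕ} (g : (Fin n → ℝ) → ℝ) : Prop :=
  Tendsto g (comap (fun x : Fin n → ℝ => ‖x‖) atTop) atTop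




lemma expEmbed_inj {n : ℕ} : Function.Injective (expEmbed (n := n)) := by
  intro a b h; ext i; exact Nat.cast_injective (congrFun h i)

lemma expEmbed_zero {n : ℕ} : expEmbed (0 : Fin n →₀ ℕ) = 0 := by
  ext i; simp [expEmbed]

/-- The face generated by `a`. -/
lemma isExtreme_seg {E : Type*} [AddCommGroup E] [Module ℝ E] {P : Set E} (hP : Convex ℝ P)
    {a : E} :
    IsExtreme ℝ P {y | y ∈ P ∧ (y = a ∨ ∃ z ∈ P, a ∈ openSegment ℝ y z)} := by
  constructor
  · exact fun y hy => hy.1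
  rintro x₁ hx₁ x₂ hx₂ x ⟨hxP, hx⟩ hseg
  rcases hx with rfl | ⟨z', hz', hsz⟩
  · exact ⟨hx₁, Or.inr ⟨x₂, hx₂, hseg⟩⟩
  · obtain ⟨c₁, c₂, hc₁, hc₂, hc, hxeq⟩ := hseg
    obtain ⟨d, e, hd, he, hde, haeq⟩ := hsz
    have key : ∀ b₁ b₂ : E, ∀ g₁ g₂ : ℝ, 0 < g₁ → 0 < g₂ → g₁ + g₂ = 1 →
        g₁ • b₁ + g₂ • b₂ = x → b₁ ∈ P → b₂ ∈ P →
        b₁ ∈ {y | y ∈ P ∧ (y = a ∨ ∃ z ∈ P, a ∈ openSegment ℝ y z)} := by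
      intro b₁ b₂ g₁ g₂ hg₁ hg₂ hg hbeq hb₁ hb₂
      have h1 : d * g₁ < 1 := by nlinarith
      have h1' : (0:ℝ) < 1 - d * g₁ := by linarith
      set p : E := (1 - d * g₁)⁻¹ • ((d * g₂) • b₂ + e • z') with hp
      have hpP : p ∈ P := by
        have hw : (d * g₂) / (1 - d * g₁) + e / (1 - d * g₁) = 1 := by
          field_simp; nlinarith
        have := hP hb₂ hz' (by positivity : (0:ℝ) ≤ (d * g₂) / (1 - d * g₁))
          (by positivity : (0:ℝ) ≤ e / (1 - d * g₁)) hw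
        convert this using 1
        rw [hp]; rw [div_eq_inv_mul, div_eq_inv_mul] at this ⊢; rw [smul_add]; module
      refine ⟨hb₁, Or.inr ⟨p, hpP, d * g₁, 1 - d * g₁, by positivity, h1', by ring, ?_⟩⟩
      rw [hp, smul_inv_smul₀ (by linarith : (1 : ℝ) - d * g₁ ≠ 0), ← haeq, ← hbeq]
      module
    exact key x₁ x₂ c₁ c₂ hc₁ hc₂ hc hxeq hx₁ hx₂
lemma hull_V0 {n : ℕ} (f : MvPolynomial (Fin n) ℝ) :
    newtonInfty f = convexHull ℝ (expEmbed '' ↑(V0 f)) := by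
  have hfin : (expEmbed '' ((insert 0 f.support : Finset (Fin n →₀ ℕ)) : Set (Fin n →₀ ℕ))).Finite :=
    ((insert 0 f.support : Finset (Fin n →₀ ℕ)).finite_toSet).image _
  have hcomp : IsCompact (newtonInfty f) := hfin.isCompact_convexHull ℝ
  have hconv : Convex ℝ (newtonInfty f) := convex_convexHull _ _
  have hext : Set.extremePoints ℝ (newtonInfty f) ⊆ expEmbed '' ↑(V0 f) := by
    intro y hy
    have hy' := extremePoints_convexHull_subset hy
    obtain ⟨β, hβ, rfl⟩ := hy'
    exact ⟨β, Finset.mem_filter.2 ⟨hβ, hy⟩, rfl⟩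
  apply le_antisymm
  · calc newtonInfty f = closure (convexHull ℝ (Set.extremePoints ℝ (newtonInfty f))) :=
          (closure_convexHull_extremePoints hcomp hconv).symm
      _ ⊆ closure (convexHull ℝ (expEmbed '' ↑(V0 f))) :=
          closure_mono (convexHull_mono hext)
      _ = convexHull ℝ (expEmbed '' ↑(V0 f)) :=
          (((V0 f).finite_toSet.image _).isClosed_convexHull ℝ).closure_eq
  · exact convexHull_mono (Set.image_mono (by exact_mod_cast Finset.filter_subset _ _))
lemma exists_rep {n : ℕ} (f : MvPolynomial (Fin n) ℝ) (hreg : GemRegular f)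
    {αs : Fin n →₀ ℕ} (hmem : αs ∈ f.support) (hnot : αs ∉ Vinf f) :
    ∃ (μ : (Fin n →₀ ℕ) → ℝ) (s : ℝ), (∀ β, 0 ≤ μ β) ∧ 0 ≤ s ∧ s < 1 ∧
      (∑ β ∈ Vinf f, μ β) ≤ s ∧
      (∀ i, (αs i : ℝ) = ∑ β ∈ Vinf f, μ β * (β i)) := by
  by_cases h0 : αs = 0
  · refine ⟨0, 0, fun _ => le_rfl, le_rfl, one_pos, by simp, fun i => by simp [h0]⟩
  set a : Fin n → ℝ := expEmbed αs with ha
  have haP : a ∈ newtonInfty f := by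
    apply subset_convexHull
    exact ⟨αs, by simp [hmem], rfl⟩
  -- Step 1: find t > 0 with (1+t) • a ∈ P
  have hray : ∃ t : ℝ, 0 < t ∧ (1 + t) • a ∈ newtonInfty f := by
    by_contra hno
    push_neg at hno
    apply hreg αs
    refine ⟨hmem, hnot, {y | y ∈ newtonInfty f ∧ (y = a ∨ ∃ z ∈ newtonInfty f,
        a ∈ openSegment ℝ y z)}, ⟨a, haP, Or.inl rfl⟩,
      isExtreme_seg (convex_convexHull _ _), ?_, ⟨haP, Or.inl rfl⟩⟩
    rintro ⟨h0P, heq | ⟨z, hz, u, v, hu, hv, huv, hzeq⟩⟩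
    · apply h0; apply expEmbed_inj
      rw [expEmbed_zero, ← ha]; exact heq.symm
    · -- v • z = a with 0 < v < 1 ; so (1+t) • a = z ∈ P with t = v⁻¹ - 1 > 0
      have hzeq' : v • z = a := by rw [← hzeq]; simp
      have hv1 : v < 1 := by linarith
      have ht : (0:ℝ) < v⁻¹ - 1 := by
        have : (1:ℝ) < v⁻¹ := (one_lt_inv₀ hv).2 hv1
        linarith
      refine hno (v⁻¹ - 1) ht ?_
      have : (1 + (v⁻¹ - 1)) • a = z := by
        rw [← hzeq', smul_smul]
        have : (1 + (v⁻¹ - 1)) * v = 1 := by field_simp; ring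
        rw [this, one_smul]
      rwa [this]
  obtain ⟨t, ht, htP⟩ := hray
  rw [hull_V0] at htP
  rw [← Finset.coe_image] at htP
  rw [Finset.convexHull_eq] at htP
  obtain ⟨w, hw0, hw1, hwc⟩ := htP
  rw [Finset.centerMass_eq_of_sum_1 _ _ hw1] at hwc
  simp only [id] at hwc
  -- pull back to V0
  have hinj : ∀ x ∈ V0 f, ∀ y ∈ V0 f, expEmbed x = expEmbed y → x = y :=
    fun x _ y _ h => expEmbed_inj h
  have hsum1 : ∑ β ∈ V0 f, w (expEmbed β) = 1 := by
    rw [← Finset.sum_image hinj]; exact hw1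
  have hvec : ∑ β ∈ V0 f, w (expEmbed β) • expEmbed β = (1 + t) • a := by
    rw [← hwc]; exact (Finset.sum_image (f := fun v => w v • v) hinj).symm
  set μ : (Fin n →₀ ℕ) → ℝ := fun β =>
    if β ∈ Vinf f then w (expEmbed β) / (1 + t) else 0 with hμ
  have h1t : (0:ℝ) < 1 + t := by linarith
  have hμnn : ∀ β, 0 ≤ μ β := by
    intro β
    rw [hμ]; dsimp only
    split_ifs with hb
    · apply div_nonneg _ h1t.le
      apply hw0
      exact Finset.mem_image_of_mem _ (Finset.mem_of_mem_erase hb)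
    · exact le_rfl
  refine ⟨μ, 1 / (1 + t), hμnn, by positivity, by rw [div_lt_one h1t]; linarith, ?_, ?_⟩
  · have : ∑ β ∈ Vinf f, μ β = (∑ β ∈ Vinf f, w (expEmbed β)) / (1 + t) := by
      rw [Finset.sum_div]
      exact Finset.sum_congr rfl fun β hb => by rw [hμ]; simp [hb]
    rw [this, one_div, div_eq_inv_mul]
    rw [inv_mul_le_iff₀ h1t, mul_inv_cancel₀ h1t.ne']
    calc ∑ β ∈ Vinf f, w (expEmbed β) ≤ ∑ β ∈ V0 f, w (expEmbed β) := by
          apply Finset.sum_le_sum_of_subset_of_nonneg (Finset.erase_subset _ _)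
          intro β hb _
          exact hw0 _ (Finset.mem_image_of_mem _ hb)
      _ = 1 := hsum1
  · intro i
    have hveci : ∑ β ∈ V0 f, w (expEmbed β) * (β i : ℝ) = (1 + t) * (αs i : ℝ) := by
      have := congrFun hvec i
      simpa [Finset.sum_apply, expEmbed, ha] using this
    have herase : ∑ β ∈ Vinf f, w (expEmbed β) * (β i : ℝ)
        = ∑ β ∈ V0 f, w (expEmbed β) * (β i : ℝ) := by
      apply Finset.sum_erase
      simp
    have : ∑ β ∈ Vinf f, μ β * (β i : ℝ)
        = (∑ β ∈ Vinf f, w (expEmbed β) * (β i : ℝ)) / (1 + t) := by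
      rw [Finset.sum_div]
      refine Finset.sum_congr rfl fun β hb => ?_
      rw [hμ]; simp [hb]; ring
    rw [this, herase, hveci]
    field_simp
def vpart (f : MvPolynomial (Fin n) ℝ) (y : Fin n → ℝ) : ℝ :=
  ∑ β ∈ Vinf f, f.coeff β * ∏ i, y i ^ (β i)

lemma vpart_eq_eval (f : MvPolynomial (Fin n) ℝ) (y : Fin n → ℝ) :
    MvPolynomial.eval y (∑ α ∈ Vinf f, MvPolynomial.monomial α (f.coeff α)) = vpart f y := by
  rw [map_sum, vpart]
  refine Finset.sum_congr rfl fun β _ => ?_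
  rw [eval_monomial, Finsupp.prod_pow]

lemma mon_nonneg (f : MvPolynomial (Fin n) ℝ) (hC1 : CondC1 f) {β : Fin n →₀ ℕ}
    (hβ : β ∈ Vinf f) (y : Fin n → ℝ) : 0 ≤ ∏ i, y i ^ (β i) :=
  Finset.prod_nonneg fun i _ => (hC1 β hβ i).pow_nonneg _

lemma vterm_nonneg (f : MvPolynomial (Fin n) ℝ) (hC1 : CondC1 f) (hC2 : CondC2 f)
    {β : Fin n →₀ ℕ} (hβ : β ∈ Vinf f) (y : Fin n → ℝ) :
    0 ≤ f.coeff β * ∏ i, y i ^ (β i) :=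
  mul_nonneg (hC2 β hβ).le (mon_nonneg f hC1 hβ y)

lemma vpart_nonneg (f : MvPolynomial (Fin n) ℝ) (hC1 : CondC1 f) (hC2 : CondC2 f)
    (y : Fin n → ℝ) : 0 ≤ vpart f y :=
  Finset.sum_nonneg fun β hβ => vterm_nonneg f hC1 hC2 hβ y

lemma le_vpart (f : MvPolynomial (Fin n) ℝ) (hC1 : CondC1 f) (hC2 : CondC2 f)
    {β : Fin n →₀ ℕ} (hβ : β ∈ Vinf f) (y : Fin n → ℝ) :
    f.coeff β * ∏ i, y i ^ (β i) ≤ vpart f y :=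
  Finset.single_le_sum (fun γ hγ => vterm_nonneg f hC1 hC2 hγ y) hβ

lemma vpart_coercive (f : MvPolynomial (Fin n) ℝ) (hC1 : CondC1 f) (hC2 : CondC2 f)
    (hC3 : CondC3 f) (hn : 0 < n)
    (x : ℕ → (Fin n → ℝ)) (hx : Tendsto (fun k => ‖x k‖) atTop atTop) :
    Tendsto (fun k => vpart f (x k)) atTop atTop := by
  haveI : NeZero n := ⟨hn.ne'⟩
  set kk : Fin n → ℕ := fun i => (hC3 i).choose with hkk
  have hkpos : ∀ i, 0 < kk i := fun i => (hC3 i).choose_spec.1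
  have hkmem : ∀ i, Finsupp.single i (2 * kk i) ∈ Vinf f := fun i => (hC3 i).choose_spec.2
  set c : ℝ := Finset.univ.inf' (Finset.univ_nonempty) (fun i => f.coeff (Finsupp.single i (2 * kk i))) with hc
  have hcpos : 0 < c := by
    rw [hc, Finset.lt_inf'_iff]
    exact fun i _ => hC2 _ (hkmem i)
  have hlow : ∀ y : Fin n → ℝ, 1 ≤ ‖y‖ → c * ‖y‖ ^ 2 ≤ vpart f y := by
    intro y hy
    obtain ⟨i₀, -, hi₀⟩ := Finset.exists_mem_eq_sup (Finset.univ : Finset (Fin n))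
      Finset.univ_nonempty (fun i => ‖y i‖₊)
    have hnorm : ‖y‖ = |y i₀| := by
      rw [Pi.norm_def, hi₀]; simp [Real.norm_eq_abs]
    calc c * ‖y‖ ^ 2 ≤ f.coeff (Finsupp.single i₀ (2 * kk i₀)) * ‖y‖ ^ (2 * kk i₀) := by
          apply mul_le_mul
          · exact Finset.inf'_le _ (Finset.mem_univ i₀)
          · exact pow_le_pow_right₀ hy (by have := hkpos i₀; omega)
          · positivity
          · exact (hC2 _ (hkmem i₀)).le
      _ ≤ vpart f y := by
          have hprod : ∏ i, y i ^ ((Finsupp.single i₀ (2 * kk i₀)) i) = y i₀ ^ (2 * kk i₀) := by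
            rw [Finset.prod_eq_single i₀]
            · rw [Finsupp.single_apply]; simp
            · intro i _ hi; rw [Finsupp.single_apply, if_neg (Ne.symm hi), pow_zero]
            · simp
          have h1 : ‖y‖ ^ (2 * kk i₀) = y i₀ ^ (2 * kk i₀) := by
            rw [hnorm, Even.pow_abs ⟨kk i₀, by ring⟩]
          rw [h1, ← hprod]
          exact le_vpart f hC1 hC2 (hkmem i₀) y
  have h2 : Tendsto (fun k => c * ‖x k‖ ^ 2) atTop atTop := by
    apply Tendsto.const_mul_atTop hcpos
    exact (tendsto_pow_atTop (two_ne_zero)).comp hx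
  apply tendsto_atTop_mono' _ _ h2
  filter_upwards [hx.eventually (eventually_ge_atTop 1)] with k hk
  exact hlow (x k) hk

lemma key_bound (f : MvPolynomial (Fin n) ℝ) (hC1 : CondC1 f) (hC2 : CondC2 f)
    {αs : Fin n →₀ ℕ} {μ : (Fin n →₀ ℕ) → ℝ}
    (hμ : ∀ β, 0 ≤ μ β) (hcoord : ∀ i, (αs i : ℝ) = ∑ β ∈ Vinf f, μ β * (β i)) :
    ∃ C : ℝ, 0 < C ∧ ∀ y : Fin n → ℝ, 1 ≤ vpart f y →
      |∏ i, y i ^ (αs i)| ≤ C * (vpart f y) ^ (∑ β ∈ Vinf f, μ β) := by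
  refine ⟨∏ β ∈ Vinf f, ((f.coeff β)⁻¹) ^ (μ β), Finset.prod_pos fun β hβ =>
    Real.rpow_pos_of_pos (inv_pos.2 (hC2 β hβ)) _, fun y hy => ?_⟩
  have hv0 : (0:ℝ) < vpart f y := lt_of_lt_of_le one_pos hy
  have step1 : |∏ i, y i ^ (αs i)| = ∏ β ∈ Vinf f, (∏ i, y i ^ (β i)) ^ (μ β) := by
    rw [Finset.abs_prod]
    calc ∏ i, |y i ^ (αs i)| = ∏ i, |y i| ^ ((αs i : ℝ)) := by
          refine Finset.prod_congr rfl fun i _ => ?_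
          rw [Real.rpow_natCast, pow_abs]
      _ = ∏ i, ∏ β ∈ Vinf f, |y i| ^ (μ β * (β i : ℝ)) := by
          refine Finset.prod_congr rfl fun i _ => ?_
          rw [hcoord i, Real.rpow_sum_of_nonneg (abs_nonneg _)]
          intro β hβ
          exact mul_nonneg (hμ β) (Nat.cast_nonneg _)
      _ = ∏ β ∈ Vinf f, ∏ i, |y i| ^ (μ β * (β i : ℝ)) := Finset.prod_comm
      _ = ∏ β ∈ Vinf f, (∏ i, y i ^ (β i)) ^ (μ β) := by
          refine Finset.prod_congr rfl fun β hβ => ?_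
          calc ∏ i, |y i| ^ (μ β * (β i : ℝ))
              = ∏ i, (|y i| ^ ((β i : ℝ))) ^ (μ β) := by
                refine Finset.prod_congr rfl fun i _ => ?_
                rw [mul_comm, Real.rpow_mul (abs_nonneg _)]
            _ = (∏ i, |y i| ^ ((β i : ℝ))) ^ (μ β) :=
                Real.finset_prod_rpow _ _ (fun i _ => Real.rpow_nonneg (abs_nonneg _) _) _
            _ = (∏ i, y i ^ (β i)) ^ (μ β) := by
                congr 1
                refine Finset.prod_congr rfl fun i _ => ?_
                rw [Real.rpow_natCast, Even.pow_abs (hC1 β hβ i)]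
  rw [step1]
  calc ∏ β ∈ Vinf f, (∏ i, y i ^ (β i)) ^ (μ β)
      ≤ ∏ β ∈ Vinf f, ((f.coeff β)⁻¹ * vpart f y) ^ (μ β) := by
        refine Finset.prod_le_prod (fun β hβ => Real.rpow_nonneg (mon_nonneg f hC1 hβ y) _)
          (fun β hβ => ?_)
        refine Real.rpow_le_rpow (mon_nonneg f hC1 hβ y) ?_ (hμ β)
        rw [← div_eq_inv_mul, le_div_iff₀ (hC2 β hβ), mul_comm]
        exact le_vpart f hC1 hC2 hβ y
    _ = (∏ β ∈ Vinf f, ((f.coeff β)⁻¹) ^ (μ β)) * (vpart f y) ^ (∑ β ∈ Vinf f, μ β) := by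
        rw [Real.rpow_sum_of_pos hv0, ← Finset.prod_mul_distrib]
        refine Finset.prod_congr rfl fun β hβ => ?_
        rw [Real.mul_rpow (inv_nonneg.2 (hC2 β hβ).le) hv0.le]

lemma eventual_small {v : ℕ → ℝ} (hv : Tendsto v atTop atTop) {s : ℝ} (hs0 : 0 ≤ s)
    (hs : s < 1) (C : ℝ) {δ : ℝ} (hδ : 0 < δ) :
    ∀ᶠ k in atTop, C * (v k) ^ s ≤ δ * v k := by
  have h1s : (0:ℝ) < 1 - s := by linarith
  filter_upwards [hv.eventually (eventually_ge_atTop 1),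
    ((tendsto_rpow_atTop h1s).comp hv).eventually (eventually_ge_atTop (C / δ))]
    with k h1 h2
  have hvk : (0:ℝ) < v k := lt_of_lt_of_le one_pos h1
  have hsplit : v k = (v k) ^ s * (v k) ^ (1 - s) := by
    rw [← Real.rpow_add hvk, add_sub_cancel, Real.rpow_one]
  have h2' : C / δ ≤ (v k) ^ (1 - s) := h2
  have hps : (0:ℝ) < (v k) ^ s := Real.rpow_pos_of_pos hvk _
  calc C * (v k) ^ s = (C / δ) * δ * (v k) ^ s := by field_simp
    _ ≤ (v k) ^ (1 - s) * δ * (v k) ^ s := by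
        apply mul_le_mul_of_nonneg_right _ hps.le
        exact mul_le_mul_of_nonneg_right h2' hδ.le
    _ = δ * ((v k) ^ s * (v k) ^ (1 - s)) := by ring
    _ = δ * v k := by rw [← hsplit]

lemma Vinf_subset_support {n : ℕ} (f : MvPolynomial (Fin n) ℝ) : Vinf f ⊆ f.support := by
  intro β hβ
  have h0 : β ≠ 0 := Finset.ne_of_mem_erase hβ
  have := (Finset.mem_filter.1 (Finset.mem_of_mem_erase hβ)).1
  rcases Finset.mem_insert.1 this with h | h
  · exact absurd h h0
  · exact h

/-- Lemma: growth of gem regular polynomials is governed from below by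
their vertex part `f^{V(f)}`. -/
theorem stmt8 {n : ℕ} (f : MvPolynomial (Fin n) ℝ) (hreg : GemRegular f)
    (hC1 : CondC1 f) (hC2 : CondC2 f) (hC3 : CondC3 f)
    (x : ℕ → (Fin n → ℝ)) (hx : Tendsto (fun k => ‖x k‖) atTop atTop) :
    ∃ ε > (0 : ℝ), ∀ᶠ k in atTop,
      ε * MvPolynomial.eval (x k) (∑ α ∈ Vinf f, MvPolynomial.monomial α (f.coeff α))
        ≤ MvPolynomial.eval (x k) f := by
  rcases Nat.eq_zero_or_pos n with hn | hn
  · exfalso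
    obtain ⟨k, hk⟩ := (hx.eventually (eventually_ge_atTop 1)).exists
    have hx0 : x k = 0 := by
      subst hn; ext i; exact absurd i.2 (by omega)
    rw [hx0, norm_zero] at hk
    linarith
  set v : ℕ → ℝ := fun k => vpart f (x k) with hv
  have hvt : Tendsto v atTop atTop := vpart_coercive f hC1 hC2 hC3 hn x hx
  refine ⟨1/2, by norm_num, ?_⟩
  set N : ℕ := (f.support \ Vinf f).card with hN
  have hδ : (0:ℝ) < 1/(2*(N+1)) := by positivity
  have hterm : ∀ α ∈ f.support \ Vinf f, ∀ᶠ k in atTop,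
      |f.coeff α * ∏ i, (x k) i ^ (α i)| ≤ (1/(2*((N:ℝ)+1))) * v k := by
    intro α hα
    rw [Finset.mem_sdiff] at hα
    obtain ⟨μ, s, hμnn, hs0, hs1, hssum, hcoord⟩ := exists_rep f hreg hα.1 hα.2
    obtain ⟨C, hC, hbound⟩ := key_bound f hC1 hC2 hμnn hcoord
    filter_upwards [hvt.eventually (eventually_ge_atTop 1),
      eventual_small hvt hs0 hs1 (|f.coeff α| * C) hδ] with k h1 h2
    calc |f.coeff α * ∏ i, (x k) i ^ (α i)|
        = |f.coeff α| * |∏ i, (x k) i ^ (α i)| := abs_mul _ _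
      _ ≤ |f.coeff α| * (C * (v k) ^ (∑ β ∈ Vinf f, μ β)) :=
          mul_le_mul_of_nonneg_left (hbound _ h1) (abs_nonneg _)
      _ ≤ |f.coeff α| * (C * (v k) ^ s) := by
          have := Real.rpow_le_rpow_of_exponent_le h1 hssum
          have h3 : (0:ℝ) ≤ |f.coeff α| * C := mul_nonneg (abs_nonneg _) hC.le
          nlinarith [abs_nonneg (f.coeff α), hC]
      _ = (|f.coeff α| * C) * (v k) ^ s := by ring
      _ ≤ (1/(2*((N:ℝ)+1))) * v k := h2
  have hall : ∀ᶠ k in atTop, ∀ α ∈ f.support \ Vinf f,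
      |f.coeff α * ∏ i, (x k) i ^ (α i)| ≤ (1/(2*((N:ℝ)+1))) * v k :=
    (Filter.eventually_all_finset _).2 hterm
  filter_upwards [hall, hvt.eventually (eventually_ge_atTop 1)] with k hk hv1
  rw [vpart_eq_eval]
  have heval : MvPolynomial.eval (x k) f
      = (∑ α ∈ f.support \ Vinf f, f.coeff α * ∏ i, (x k) i ^ (α i)) + v k := by
    rw [eval_eq']
    show _ = _ + ∑ β ∈ Vinf f, f.coeff β * ∏ i, (x k) i ^ (β i)
    exact (Finset.sum_sdiff (Vinf_subset_support f)).symm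
  have habs : |∑ α ∈ f.support \ Vinf f, f.coeff α * ∏ i, (x k) i ^ (α i)|
      ≤ (N:ℝ) * ((1/(2*((N:ℝ)+1))) * v k) := by
    calc |∑ α ∈ f.support \ Vinf f, f.coeff α * ∏ i, (x k) i ^ (α i)|
        ≤ ∑ α ∈ f.support \ Vinf f, |f.coeff α * ∏ i, (x k) i ^ (α i)| :=
          Finset.abs_sum_le_sum_abs _ _
      _ ≤ ∑ _α ∈ f.support \ Vinf f, (1/(2*((N:ℝ)+1))) * v k := Finset.sum_le_sum hk
      _ = (N:ℝ) * ((1/(2*((N:ℝ)+1))) * v k) := by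
          rw [Finset.sum_const, nsmul_eq_mul, hN]
  have hhalf : (N:ℝ) * ((1/(2*((N:ℝ)+1))) * v k) ≤ v k / 2 := by
    have hvk : (0:ℝ) ≤ v k := by linarith
    have hN1 : (0:ℝ) < (N:ℝ) + 1 := by positivity
    have hf : (N:ℝ)/(2*((N:ℝ)+1)) ≤ 1/2 := by
      rw [div_le_div_iff₀ (by positivity) two_pos]
      nlinarith
    calc (N:ℝ) * ((1/(2*((N:ℝ)+1))) * v k) = ((N:ℝ)/(2*((N:ℝ)+1))) * v k := by ring
      _ ≤ (1/2) * v k := mul_le_mul_of_nonneg_right hf hvk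
      _ = v k / 2 := by ring
  have := abs_le.1 habs
  rw [heval]
  linarith [hhalf, this.1]

end
end

section
/- Let f ∈ ℝ[x₁,…,xₙ] be a circuit polynomial, f(x) = Σ_{j=0}^r f_{α(j)} x^{α(j)} + f_{α*} x^{α*}, with barycentric coordinates λ_j of α* relative to the vertices α(j). Then f(x) ≥ 0 for all x ∈ ℝⁿ if and only if: f_{α*} ≥ −Π_{j=0}^r (f_{α(j)}/λ_j)^{λ_j} in case α* ∈ (2ℕ₀)ⁿ, and |f_{α*}| ≤ Π_{j=0}^r (f_{α(j)}/λ_j)^{λ_j} in case α* ∉ (2ℕ₀)ⁿ. -/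
open MvPolynomial Filter

noncomputable section

open scoped Classical

/-- The polynomial `Σ_{j=0}^r c_j x^{α(j)} + c* x^{α*}`. -/
noncomputable def circuitPoly {n r : ℕ} (α : Fin (r + 1) → (Fin n →₀ ℕ)) (c : Fin (r + 1) → ℝ)
    (αs : Fin n →₀ ℕ) (cs : ℝ) : MvPolynomial (Fin n) ℝ :=
  (∑ j, MvPolynomial.monomial (α j) (c j)) + MvPolynomial.monomial αs cs

/-- The data `(α, c, α*, c*, λ)` describes a circuit polynomial
`f = Σ_{j=0}^r c_j x^{α(j)} + c* x^{α*}` with `r ≤ n`. -/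
def IsCircuit {n r : ℕ} (α : Fin (r + 1) → (Fin n →₀ ℕ)) (c : Fin (r + 1) → ℝ)
    (αs : Fin n →₀ ℕ) (cs : ℝ) (lam : Fin (r + 1) → ℝ) : Prop :=
  r ≤ n ∧
  αs ∉ Set.range α ∧
  (∀ j, IsEvenExp (α j)) ∧
  (∀ j, 0 < c j) ∧
  Set.extremePoints ℝ
      (convexHull ℝ (expEmbed '' ((circuitPoly α c αs cs).support : Set (Fin n →₀ ℕ))))
    = expEmbed '' Set.range α ∧
  AffineIndependent ℝ (fun j => expEmbed (α j)) ∧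
  (∀ j, 0 < lam j) ∧ (∑ j, lam j) = 1 ∧ (∑ j, lam j • expEmbed (α j)) = expEmbed αs

/-- The circuit number `Θ = Π_{j=0}^r (c_j / λ_j)^{λ_j}` of a circuit polynomial. -/
noncomputable def circuitTheta {r : ℕ} (c : Fin (r + 1) → ℝ) (lam : Fin (r + 1) → ℝ) : ℝ :=
  ∏ j, (c j / lam j) ^ (lam j)

section Aux
open Matrix

lemma eval_circuitPoly {n r : ℕ} (α : Fin (r + 1) → (Fin n →₀ ℕ)) (c : Fin (r + 1) → ℝ)
    (αs : Fin n →₀ ℕ) (cs : ℝ) (x : Fin n → ℝ) :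
    MvPolynomial.eval x (circuitPoly α c αs cs)
      = (∑ j, c j * ∏ i, x i ^ (α j i)) + cs * ∏ i, x i ^ (αs i) := by
  simp only [circuitPoly, map_add, map_sum, MvPolynomial.eval_monomial]
  congr 1
  · exact Finset.sum_congr rfl fun j _ => by
      rw [Finsupp.prod_fintype _ _ fun i => pow_zero (x i)]
  · rw [Finsupp.prod_fintype _ _ fun i => pow_zero (x i)]

lemma exists_dot_eq {n r : ℕ} (v : Fin r → (Fin n → ℝ))
    (hv : LinearIndependent ℝ v) (b : Fin r → ℝ) :
    ∃ t : Fin n → ℝ, ∀ j, ∑ i, v j i * t i = b j := by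
  classical
  set M : Matrix (Fin r) (Fin n) ℝ := Matrix.of v with hM
  have hinj : Function.Injective M.vecMul := Matrix.vecMul_injective_iff.mpr hv
  set g : Matrix (Fin r) (Fin r) ℝ := M * Mᵀ with hg
  have hker : ∀ y, g.mulVec y = 0 → y = 0 := by
    intro y hy
    have h1 : M.mulVec (Mᵀ.mulVec y) = 0 := by
      rw [Matrix.mulVec_mulVec]; exact hy
    have h2 : dotProduct (M.vecMul y) (M.vecMul y) = 0 := by
      have h3 : dotProduct y (M.mulVec (Mᵀ.mulVec y)) = 0 := by
        rw [h1, dotProduct_zero]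
      rwa [Matrix.dotProduct_mulVec, Matrix.mulVec_transpose] at h3
    have h3 : M.vecMul y = 0 := dotProduct_self_eq_zero.mp h2
    have h0 : M.vecMul 0 = 0 := by
      ext i; simp [Matrix.vecMul, dotProduct]
    exact hinj (h3.trans h0.symm)
  have hginj : Function.Injective g.mulVec := by
    intro y z hyz
    have h4 : g.mulVec (y - z) = 0 := by
      rw [Matrix.mulVec_sub, hyz, sub_self]
    exact sub_eq_zero.mp (hker _ h4)
  have hunit : IsUnit g := Matrix.mulVec_injective_iff_isUnit.mp hginj
  obtain ⟨y, hy⟩ := (Matrix.mulVec_surjective_iff_isUnit.mpr hunit) b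
  refine ⟨Mᵀ.mulVec y, fun j => ?_⟩
  have h5 : (M.mulVec (Mᵀ.mulVec y)) j = b j := by rw [Matrix.mulVec_mulVec, hy]
  simpa [Matrix.mulVec, dotProduct, hM] using h5

lemma circuitTheta_pos {r : ℕ} {c lam : Fin (r + 1) → ℝ}
    (hc : ∀ j, 0 < c j) (hlam : ∀ j, 0 < lam j) : 0 < circuitTheta c lam :=
  Finset.prod_pos fun j _ => Real.rpow_pos_of_pos (div_pos (hc j) (hlam j)) _

lemma prod_pow_eq_rpow {n r : ℕ} (α : Fin (r + 1) → (Fin n →₀ ℕ)) (lam : Fin (r + 1) → ℝ)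
    (αs : Fin n →₀ ℕ) (hsum : ∀ i, (αs i : ℝ) = ∑ j, lam j * (α j i))
    (y : Fin n → ℝ) (hy : ∀ i, 0 < y i) :
    (∏ i, y i ^ (αs i)) = ∏ j, (∏ i, y i ^ (α j i)) ^ (lam j) := by
  have h1 : ∀ i, (y i) ^ (αs i : ℕ) = ∏ j, ((y i) ^ (α j i : ℕ)) ^ (lam j) := by
    intro i
    rw [← Real.rpow_natCast (y i) (αs i), hsum i, Real.rpow_sum_of_pos (hy i)]
    refine Finset.prod_congr rfl fun j _ => ?_
    rw [mul_comm, Real.rpow_mul (hy i).le, Real.rpow_natCast]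
  calc (∏ i, y i ^ (αs i)) = ∏ i, ∏ j, ((y i) ^ (α j i)) ^ (lam j) :=
        Finset.prod_congr rfl fun i _ => h1 i
    _ = ∏ j, ∏ i, ((y i) ^ (α j i)) ^ (lam j) := Finset.prod_comm
    _ = ∏ j, (∏ i, y i ^ (α j i)) ^ (lam j) := Finset.prod_congr rfl fun j _ =>
        Real.finset_prod_rpow _ _ (fun i _ => pow_nonneg (hy i).le _) _

lemma key_ineq {n r : ℕ} (α : Fin (r + 1) → (Fin n →₀ ℕ)) (c lam : Fin (r + 1) → ℝ)
    (αs : Fin n →₀ ℕ) (hc : ∀ j, 0 < c j) (hlam : ∀ j, 0 < lam j)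
    (hlam1 : (∑ j, lam j) = 1) (hsum : ∀ i, (αs i : ℝ) = ∑ j, lam j * (α j i))
    (y : Fin n → ℝ) (hy : ∀ i, 0 ≤ y i) :
    circuitTheta c lam * ∏ i, y i ^ (αs i) ≤ ∑ j, c j * ∏ i, y i ^ (α j i) := by
  classical
  have hrhs : 0 ≤ ∑ j, c j * ∏ i, y i ^ (α j i) :=
    Finset.sum_nonneg fun j _ => mul_nonneg (hc j).le
      (Finset.prod_nonneg fun i _ => pow_nonneg (hy i) _)
  by_cases hz : ∃ i, y i = 0 ∧ αs i ≠ 0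
  · obtain ⟨i, hyi, hi⟩ := hz
    have : (∏ i, y i ^ (αs i)) = 0 :=
      Finset.prod_eq_zero (Finset.mem_univ i) (by rw [hyi, zero_pow hi])
    rw [this, mul_zero]; exact hrhs
  · push_neg at hz
    have hzero : ∀ i, y i = 0 → ∀ j, α j i = 0 := by
      intro i hyi j
      have h0 : (αs i : ℝ) = 0 := by rw [hz i hyi]; simp
      have h1 : ∑ j, lam j * (α j i : ℝ) = 0 := by rw [← hsum i, h0]
      have h2 := (Finset.sum_eq_zero_iff_of_nonneg fun j _ =>
        mul_nonneg (hlam j).le (Nat.cast_nonneg _)).mp h1 j (Finset.mem_univ j)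
      have h3 : (α j i : ℝ) = 0 := by
        rcases mul_eq_zero.mp h2 with h | h
        · exact absurd h (hlam j).ne'
        · exact h
      exact_mod_cast h3
    set y' : Fin n → ℝ := fun i => if y i = 0 then 1 else y i with hy'
    have hy'pos : ∀ i, 0 < y' i := by
      intro i; by_cases h : y i = 0 <;> simp [hy', h]
      exact lt_of_le_of_ne (hy i) (Ne.symm h)
    have heqj : ∀ d : Fin n →₀ ℕ, (∀ i, y i = 0 → d i = 0) →
        (∏ i, y i ^ (d i)) = ∏ i, y' i ^ (d i) := by
      intro d hd
      refine Finset.prod_congr rfl fun i _ => ?_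
      by_cases h : y i = 0
      · rw [hd i h, pow_zero, pow_zero]
      · simp [hy', h]
    rw [heqj αs (fun i h => hz i h)]
    rw [Finset.sum_congr rfl fun j _ => by rw [heqj (α j) (fun i h => hzero i h j)]]
    set P : Fin (r + 1) → ℝ := fun j => ∏ i, y' i ^ (α j i) with hP
    have hPpos : ∀ j, 0 < P j := fun j =>
      Finset.prod_pos fun i _ => pow_pos (hy'pos i) _
    have hamgm := Real.geom_mean_le_arith_mean_weighted Finset.univ lam
      (fun j => (c j / lam j) * P j) (fun j _ => (hlam j).le) hlam1
      (fun j _ => mul_nonneg (div_pos (hc j) (hlam j)).le (hPpos j).le)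
    calc circuitTheta c lam * ∏ i, y' i ^ (αs i)
        = (∏ j, (c j / lam j) ^ (lam j)) * ∏ j, (P j) ^ (lam j) := by
          rw [circuitTheta, prod_pow_eq_rpow α lam αs hsum y' hy'pos]
      _ = ∏ j, ((c j / lam j) * P j) ^ (lam j) := by
          rw [← Finset.prod_mul_distrib]
          exact Finset.prod_congr rfl fun j _ =>
            (Real.mul_rpow (div_pos (hc j) (hlam j)).le (hPpos j).le).symm
      _ ≤ ∑ j, lam j * ((c j / lam j) * P j) := hamgm
      _ = ∑ j, c j * P j := Finset.sum_congr rfl fun j _ => by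
          field_simp
          rw [mul_assoc]; exact mul_div_cancel_left₀ _ (hlam j).ne'

end Aux

/-- Theorem: nonnegativity of circuit polynomials via circuit numbers. -/
theorem stmt9 {n r : ℕ} (α : Fin (r + 1) → (Fin n →₀ ℕ)) (c : Fin (r + 1) → ℝ)
    (αs : Fin n →₀ ℕ) (cs : ℝ) (lam : Fin (r + 1) → ℝ)
    (hcirc : IsCircuit α c αs cs lam) :
    (∀ x : Fin n → ℝ, 0 ≤ MvPolynomial.eval x (circuitPoly α c αs cs)) ↔
      ((IsEvenExp αs → -circuitTheta c lam ≤ cs) ∧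
        (¬ IsEvenExp αs → |cs| ≤ circuitTheta c lam)) := by
  obtain ⟨-, -, heven, hc, -, haff, hlam, hlam1, hbary⟩ := hcirc
  have hsum : ∀ i, (αs i : ℝ) = ∑ j, lam j * (α j i) := by
    intro i
    have h1 := congrFun hbary i
    simpa [expEmbed, Finset.sum_apply, smul_eq_mul] using h1.symm
  have hΘ := circuitTheta_pos hc hlam
  constructor
  · intro h
    have hli : LinearIndependent ℝ (fun j : Fin r => expEmbed (α j.succ) - expEmbed (α 0)) := by
      have h1 := (affineIndependent_iff_linearIndependent_vsub ℝ (fun j => expEmbed (α j)) 0).mp haff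
      have h2 := h1.comp
        (fun j : Fin r => (⟨j.succ, Fin.succ_ne_zero j⟩ : {x : Fin (r+1) // x ≠ 0}))
        (fun a b hab => by
          have h3 := congrArg Subtype.val hab
          simpa [Fin.succ_inj] using h3)
      simpa [Function.comp_def] using h2
    obtain ⟨t, ht⟩ := exists_dot_eq _ hli
      (fun j => Real.log (lam j.succ * c 0 / (lam 0 * c j.succ)))
    set x : Fin n → ℝ := fun i => Real.exp (t i) with hxdef
    have hx : ∀ i, 0 < x i := fun i => Real.exp_pos _
    have hPpos : ∀ j, 0 < ∏ i, x i ^ (α j i) :=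
      fun j => Finset.prod_pos fun i _ => pow_pos (hx i) _
    have hPexp : ∀ j : Fin (r+1), (∏ i, x i ^ (α j i)) = Real.exp (∑ i, (α j i : ℝ) * t i) := by
      intro j
      rw [Real.exp_sum]
      exact Finset.prod_congr rfl fun i _ => (Real.exp_nat_mul (t i) (α j i)).symm
    set K : ℝ := (∏ i, x i ^ (α 0 i)) * c 0 / lam 0 with hKdef
    have hK : 0 < K := div_pos (mul_pos (hPpos 0) (hc 0)) (hlam 0)
    have hcP : ∀ j, c j * ∏ i, x i ^ (α j i) = lam j * K := by
      intro j
      refine Fin.cases ?_ ?_ j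
      · rw [hKdef]; field_simp [(hlam 0).ne']
      · intro j'
        have hb := ht j'
        have hsub : (∑ i, (α j'.succ i : ℝ) * t i) - (∑ i, (α 0 i : ℝ) * t i)
            = Real.log (lam j'.succ * c 0 / (lam 0 * c j'.succ)) := by
          rw [← Finset.sum_sub_distrib, ← hb]
          exact Finset.sum_congr rfl fun i _ => by simp [expEmbed, sub_mul]
        have hpos : 0 < lam j'.succ * c 0 / (lam 0 * c j'.succ) :=
          div_pos (mul_pos (hlam _) (hc 0)) (mul_pos (hlam 0) (hc _))
        have hexp : (∏ i, x i ^ (α j'.succ i)) / (∏ i, x i ^ (α 0 i))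
            = lam j'.succ * c 0 / (lam 0 * c j'.succ) := by
          rw [hPexp, hPexp, ← Real.exp_sub, hsub, Real.exp_log hpos]
        rw [div_eq_div_iff (hPpos 0).ne' (mul_pos (hlam 0) (hc _)).ne'] at hexp
        rw [hKdef]
        field_simp [(hlam 0).ne']
        linear_combination hexp
    have hKsum : (∑ j, c j * ∏ i, x i ^ (α j i)) = K := by
      rw [Finset.sum_congr rfl fun j _ => hcP j, ← Finset.sum_mul, hlam1, one_mul]
    have hxs : (∏ i, x i ^ (αs i)) = K / circuitTheta c lam := by
      rw [prod_pow_eq_rpow α lam αs hsum x hx]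
      have hPj : ∀ j, (∏ i, x i ^ (α j i)) = K / (c j / lam j) := by
        intro j
        rw [eq_div_iff (div_pos (hc j) (hlam j)).ne']
        have h6 := hcP j
        field_simp [(hlam j).ne']
        linear_combination h6
      calc (∏ j, (∏ i, x i ^ (α j i)) ^ (lam j))
          = ∏ j, (K ^ lam j / (c j / lam j) ^ lam j) :=
            Finset.prod_congr rfl fun j _ => by
              rw [hPj j, Real.div_rpow hK.le (div_pos (hc j) (hlam j)).le]
        _ = (∏ j, K ^ lam j) / ∏ j, (c j / lam j) ^ lam j := Finset.prod_div_distrib _ _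
        _ = K / circuitTheta c lam := by
            rw [← Real.rpow_sum_of_pos hK, hlam1, Real.rpow_one, circuitTheta]
    have hfx := h x
    rw [eval_circuitPoly, hKsum, hxs] at hfx
    have hid : (K + cs * (K / circuitTheta c lam)) * circuitTheta c lam
        = K * circuitTheta c lam + cs * K := by
      field_simp
    have hfx' : 0 ≤ K * circuitTheta c lam + cs * K := by
      rw [← hid]; exact mul_nonneg hfx hΘ.le
    have hcs1 : -circuitTheta c lam ≤ cs := by nlinarith [hfx', hK]
    refine ⟨fun _ => hcs1, fun hodd => ?_⟩
    obtain ⟨i₀, hi₀⟩ : ∃ i, ¬ Even (αs i) := not_forall.mp hodd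
    have hodd0 : Odd (αs i₀) := Nat.not_even_iff_odd.mp hi₀
    set x' : Fin n → ℝ := Function.update x i₀ (-(x i₀)) with hx'def
    have hupd : ∀ i, i ≠ i₀ → x' i = x i := fun i hi => Function.update_of_ne hi _ _
    have hupd0 : x' i₀ = -(x i₀) := Function.update_self _ _ _
    have hP' : ∀ j, (∏ i, x' i ^ (α j i)) = ∏ i, x i ^ (α j i) := by
      intro j
      refine Finset.prod_congr rfl fun i _ => ?_
      by_cases hi : i = i₀
      · subst hi; rw [hupd0, (heven j i).neg_pow]
      · rw [hupd i hi]
    have hcompl : (∏ i ∈ ({i₀}ᶜ : Finset (Fin n)), x' i ^ (αs i))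
        = ∏ i ∈ ({i₀}ᶜ : Finset (Fin n)), x i ^ (αs i) :=
      Finset.prod_congr rfl fun i hi => by
        rw [hupd i (Finset.notMem_singleton.mp (Finset.mem_compl.mp hi))]
    have hxs' : (∏ i, x' i ^ (αs i)) = -(K / circuitTheta c lam) := by
      calc (∏ i, x' i ^ (αs i))
          = x' i₀ ^ (αs i₀) * ∏ i ∈ ({i₀}ᶜ : Finset (Fin n)), x' i ^ (αs i) :=
            Fintype.prod_eq_mul_prod_compl i₀ _
        _ = -(x i₀ ^ (αs i₀) * ∏ i ∈ ({i₀}ᶜ : Finset (Fin n)), x i ^ (αs i)) := by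
            rw [hupd0, hodd0.neg_pow, hcompl, neg_mul]
        _ = -(∏ i, x i ^ (αs i)) := congrArg Neg.neg (Fintype.prod_eq_mul_prod_compl i₀ (fun i => x i ^ (αs i))).symm
        _ = -(K / circuitTheta c lam) := by rw [hxs]
    have hfx2 := h x'
    rw [eval_circuitPoly,
      show (∑ j, c j * ∏ i, x' i ^ (α j i)) = ∑ j, c j * ∏ i, x i ^ (α j i) from
        Finset.sum_congr rfl fun j _ => by rw [hP' j],
      hKsum, hxs'] at hfx2
    have hid2 : (K + cs * -(K / circuitTheta c lam)) * circuitTheta c lam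
        = K * circuitTheta c lam - cs * K := by
      field_simp; ring
    have hfx2' : 0 ≤ K * circuitTheta c lam - cs * K := by
      rw [← hid2]; exact mul_nonneg hfx2 hΘ.le
    have hcs2 : cs ≤ circuitTheta c lam := by nlinarith [hfx2', hK]
    exact abs_le.mpr ⟨hcs1, hcs2⟩
  · rintro ⟨h1, h2⟩ x
    rw [eval_circuitPoly]
    have hkey := key_ineq α c lam αs hc hlam hlam1 hsum (fun i => |x i|) (fun i => abs_nonneg _)
    have habsj : ∀ j, (∏ i, x i ^ (α j i)) = ∏ i, |x i| ^ (α j i) :=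
      fun j => Finset.prod_congr rfl fun i _ => ((heven j i).pow_abs _).symm
    have habs2 : |∏ i, x i ^ (αs i)| = ∏ i, |x i| ^ (αs i) := by
      rw [Finset.abs_prod]
      exact Finset.prod_congr rfl fun i _ => abs_pow _ _
    rw [Finset.sum_congr rfl fun j _ => by rw [habsj j]]
    have hPn : 0 ≤ ∏ i, |x i| ^ (αs i) :=
      Finset.prod_nonneg fun i _ => pow_nonneg (abs_nonneg _) _
    by_cases he : IsEvenExp αs
    · have h3 : (∏ i, x i ^ (αs i)) = ∏ i, |x i| ^ (αs i) :=
        Finset.prod_congr rfl fun i _ => ((he i).pow_abs _).symm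
      rw [h3]
      nlinarith [hkey, hPn, h1 he,
        mul_nonneg (by linarith [h1 he] : (0:ℝ) ≤ circuitTheta c lam + cs) hPn]
    · have hcs := h2 he
      have h5 : |cs * ∏ i, x i ^ (αs i)| ≤ circuitTheta c lam * ∏ i, |x i| ^ (αs i) := by
        rw [abs_mul, habs2]
        exact mul_le_mul_of_nonneg_right hcs hPn
      have h4 := neg_abs_le (cs * ∏ i, x i ^ (αs i))
      linarith [hkey, (abs_le.mp h5).1]


end
end

section
/- Let f ∈ ℝ[x₁,…,xₙ] satisfy conditions (C1), (C2) and (C3), let λ_f be a map of minimal barycentric coordinates of f, and let α* ∈ D(f). Then the polynomial g_{α*}(x) := Σ_{α∈V₀(f)} |f_{α*}|·λ_f(α*,α)·x^α + f_{α*}·x^{α*} satisfies g_{α*}(x) ≥ 0 for all x ∈ ℝⁿ. -/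
open MvPolynomial Filter

noncomputable section

open scoped Classical

/-- for any gem degenerate exponent vector `α*` of `f`, the auxiliary
circuit polynomial `g_{α*}(x) = Σ_{α∈V₀(f)} |f_{α*}| λ_f(α*,α) x^α + f_{α*} x^{α*}` is
globally nonnegative. -/
theorem stmt10 {n : ℕ} (f : MvPolynomial (Fin n) ℝ)
    (hC1 : CondC1 f) (hC2 : CondC2 f) (hC3 : CondC3 f)
    (lam : (Fin n →₀ ℕ) → (Fin n →₀ ℕ) → ℝ) (hlam : IsMinBary f lam)
    (αs : Fin n →₀ ℕ) (hαs : IsGemDegenerate f αs) (x : Fin n → ℝ) :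
    0 ≤ (∑ α ∈ V0 f, |f.coeff αs| * lam αs α * ∏ i, x i ^ (α i))
        + f.coeff αs * ∏ i, x i ^ (αs i) := by
  classical
  obtain ⟨hsupp, hnv, G, hGne, hGext, hG0, hGmem⟩ := hαs
  have hne0 : αs ≠ 0 := by
    rintro rfl
    apply hG0
    have h0 : expEmbed (0 : Fin n →₀ ℕ) = (0 : Fin n → ℝ) := by
      funext i; simp [expEmbed]
    rwa [h0] at hGmem
  have hnotV0 : αs ∉ V0 f := fun h => hnv (Finset.mem_erase.mpr ⟨hne0, h⟩)
  have hmem : αs ∈ V0c f := Finset.mem_sdiff.mpr ⟨hsupp, hnotV0⟩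
  obtain ⟨W, hWsub, _, hpos, hzero, hsum1, hsumvec⟩ := hlam.2 αs hmem
  set c := f.coeff αs with hc
  have heven : ∀ α ∈ W, ∀ i, Even (α i) := by
    intro α hα i
    by_cases h0 : α = 0
    · subst h0; simp
    · exact hC1 α (Finset.mem_erase.mpr ⟨h0, hWsub hα⟩) i
  set z : (Fin n →₀ ℕ) → ℝ := fun α => ∏ i, x i ^ (α i) with hzdef
  show 0 ≤ (∑ α ∈ V0 f, |c| * lam αs α * z α) + c * z αs
  have hznn : ∀ α ∈ W, 0 ≤ z α := fun α hα =>
    Finset.prod_nonneg fun i _ => (heven α hα i).pow_nonneg _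
  have hAM : ∏ α ∈ W, z α ^ (lam αs α) ≤ ∑ α ∈ W, lam αs α * z α :=
    Real.geom_mean_le_arith_mean_weighted W _ _ (fun α hα => (hpos α hα).le) hsum1 hznn
  have hcoord : ∀ i, ∑ α ∈ W, lam αs α * (α i : ℝ) = (αs i : ℝ) := by
    intro i
    have h := congrFun hsumvec i
    simpa [expEmbed, Finset.sum_apply] using h
  have hprod : ∏ α ∈ W, z α ^ (lam αs α) = ∏ i, |x i| ^ (αs i) := by
    have h1 : ∀ α ∈ W, z α ^ (lam αs α)
        = ∏ i, |x i| ^ ((lam αs α) * (α i : ℝ)) := by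
      intro α hα
      have hzα : z α = ∏ i, |x i| ^ ((α i : ℝ)) := by
        rw [hzdef]
        refine Finset.prod_congr rfl fun i _ => ?_
        rw [Real.rpow_natCast, (heven α hα i).pow_abs]
      rw [hzα, ← Real.finset_prod_rpow _ _ (fun i _ => Real.rpow_nonneg (abs_nonneg _) _)]
      refine Finset.prod_congr rfl fun i _ => ?_
      rw [← Real.rpow_mul (abs_nonneg _), mul_comm]
    rw [Finset.prod_congr rfl h1, Finset.prod_comm]
    refine Finset.prod_congr rfl fun i _ => ?_
    rw [← Real.rpow_sum_of_nonneg (abs_nonneg _)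
      (fun α hα => mul_nonneg (hpos α hα).le (Nat.cast_nonneg _)), hcoord i,
      Real.rpow_natCast]
  have hsplit : ∑ α ∈ V0 f, |c| * lam αs α * z α = ∑ α ∈ W, |c| * lam αs α * z α := by
    symm
    refine Finset.sum_subset hWsub fun α hα hαW => ?_
    rw [hzero α hα hαW]; ring
  have habs : |z αs| = ∏ i, |x i| ^ (αs i) := by
    rw [hzdef]
    simp [Finset.abs_prod, abs_pow]
  have key : |c| * |z αs| ≤ ∑ α ∈ W, |c| * lam αs α * z α := by
    calc |c| * |z αs| = |c| * ∏ α ∈ W, z α ^ (lam αs α) := by rw [habs, ← hprod]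
      _ ≤ |c| * ∑ α ∈ W, lam αs α * z α :=
          mul_le_mul_of_nonneg_left hAM (abs_nonneg c)
      _ = ∑ α ∈ W, |c| * lam αs α * z α := by
          rw [Finset.mul_sum]
          exact Finset.sum_congr rfl fun _ _ => by ring
  have hneg : -(c * z αs) ≤ |c| * |z αs| := by
    rw [← abs_mul]; exact neg_le_abs _
  rw [hsplit]
  linarith


end
end

section
/- Let S ⊆ (2ℕ₀)ⁿ be a finite set of exponent vectors such that for every i ∈ {1,…,n} there exists k_i ∈ ℕ with 2k_i e_i ∈ S, and let c_α > 0 for each α ∈ S. Then the polynomial F(x) = Σ_{α∈S} c_α x^α is coercive on ℝⁿ. -/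
open MvPolynomial Filter

noncomputable section

open scoped Classical

/-- a polynomial with positive coefficients, even exponents and an
axis exponent `2kᵢeᵢ` for every coordinate direction is coercive. -/
theorem stmt11 {n : ℕ} (S : Finset (Fin n →₀ ℕ)) (c : (Fin n →₀ ℕ) → ℝ)
    (heven : ∀ α ∈ S, ∀ i, Even (α i))
    (haxis : ∀ i : Fin n, ∃ k : ℕ, 0 < k ∧ Finsupp.single i (2 * k) ∈ S)
    (hc : ∀ α ∈ S, 0 < c α) :
    Coercive fun x : Fin n → ℝ => ∑ α ∈ S, c α * ∏ i, x i ^ (α i) := by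
  unfold Coercive
  rcases Nat.eq_zero_or_pos n with hn | hn
  · subst hn
    have hmem : (fun x : Fin 0 → ℝ => ‖x‖) ⁻¹' Set.Ioi 0 ∈
        comap (fun x : Fin 0 → ℝ => ‖x‖) atTop :=
      Filter.preimage_mem_comap (Filter.Ioi_mem_atTop 0)
    have hempty : (fun x : Fin 0 → ℝ => ‖x‖) ⁻¹' Set.Ioi 0 = ∅ := by
      ext x
      have : x = 0 := Subsingleton.elim x 0
      simp [this]
    rw [hempty, Filter.empty_mem_iff_bot] at hmem
    rw [hmem]
    exact tendsto_bot
  -- choose axis exponents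
  choose k hk hkS using haxis
  set C : ℝ := Finset.univ.inf' (Finset.univ_nonempty_iff.2 (Fin.pos_iff_nonempty.1 hn))
      (fun i => c (Finsupp.single i (2 * k i))) with hC
  have hCpos : 0 < C := by
    obtain ⟨i, _, hi⟩ := Finset.exists_mem_eq_inf' (f := fun i => c (Finsupp.single i (2 * k i)))
      (Finset.univ_nonempty_iff.2 (Fin.pos_iff_nonempty.1 hn))
    rw [hC, hi]
    exact hc _ (hkS i)
  have key : ∀ x : Fin n → ℝ, 1 ≤ ‖x‖ →
      C * ‖x‖ ^ 2 ≤ ∑ α ∈ S, c α * ∏ i, x i ^ (α i) := by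
    intro x hx
    -- find a coordinate achieving the norm
    have hne : (Finset.univ : Finset (Fin n)).Nonempty :=
      Finset.univ_nonempty_iff.2 (Fin.pos_iff_nonempty.1 hn)
    obtain ⟨i, _, hi⟩ := Finset.exists_mem_eq_sup (Finset.univ : Finset (Fin n)) hne
      (fun i => ‖x i‖₊)
    have hxi : ‖x‖ = |x i| := by
      rw [Pi.norm_def, hi]; simp
    have hterm : C * ‖x‖ ^ 2 ≤ c (Finsupp.single i (2 * k i)) *
        ∏ j, x j ^ ((Finsupp.single i (2 * k i)) j) := by
      have hprod : ∏ j, x j ^ ((Finsupp.single i (2 * k i)) j) = x i ^ (2 * k i) := by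
        rw [Finset.prod_eq_single i]
        · simp [Finsupp.single_apply]
        · intro j _ hj
          simp [Finsupp.single_apply, Ne.symm hj]
        · simp
      rw [hprod]
      have h1 : ‖x‖ ^ 2 ≤ x i ^ (2 * k i) := by
        have : x i ^ (2 * k i) = (x i ^ 2) ^ (k i) := by ring
        rw [this]
        have hx2 : ‖x‖ ^ 2 ≤ x i ^ 2 := by
          rw [hxi, sq_abs]
        calc ‖x‖ ^ 2 ≤ x i ^ 2 := hx2
          _ ≤ (x i ^ 2) ^ (k i) := by
            refine le_self_pow₀ ?_ (hk i).ne'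
            exact le_trans (one_le_pow₀ hx) hx2
      have hCle : C ≤ c (Finsupp.single i (2 * k i)) :=
        Finset.inf'_le _ (Finset.mem_univ i)
      have h0 : 0 ≤ ‖x‖ ^ 2 := sq_nonneg _
      calc C * ‖x‖ ^ 2 ≤ c (Finsupp.single i (2 * k i)) * ‖x‖ ^ 2 := by
            exact mul_le_mul_of_nonneg_right hCle h0
        _ ≤ c (Finsupp.single i (2 * k i)) * x i ^ (2 * k i) :=
            mul_le_mul_of_nonneg_left h1 (le_of_lt (hc _ (hkS i)))
    refine le_trans hterm ?_
    refine Finset.single_le_sum (f := fun α => c α * ∏ j, x j ^ (α j)) ?_ (hkS i)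
    intro α hα
    refine mul_nonneg (le_of_lt (hc _ hα)) (Finset.prod_nonneg ?_)
    intro j _
    exact Even.pow_nonneg (heven α hα j) _
  have hnorm : Tendsto (fun x : Fin n → ℝ => ‖x‖)
      (comap (fun x : Fin n → ℝ => ‖x‖) atTop) atTop := tendsto_comap
  have hlow : Tendsto (fun x : Fin n → ℝ => C * ‖x‖ ^ 2)
      (comap (fun x : Fin n → ℝ => ‖x‖) atTop) atTop := by
    exact Tendsto.const_mul_atTop hCpos ((tendsto_pow_atTop two_ne_zero).comp hnorm)
  refine tendsto_atTop_mono' _ ?_ hlow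
  filter_upwards [hnorm.eventually_ge_atTop 1] with x hx
  exact key x hx

end
end

section
/- Let f ∈ ℝ[x₁,…,xₙ] be a circuit polynomial, f(x) = Σ_{j=0}^{n-1} f_{α(j)} x^{α(j)} + f_{α*} x^{α*}, with r = n−1, satisfying conditions (C1), (C2) and (C3), and let λ_f denote the unique map of minimal barycentric coordinates of f. If either f_{α*} = −Θ(f,λ_f,α*), or α* ∉ (2ℕ₀)ⁿ and |f_{α*}| = Θ(f,λ_f,α*), then f is not coercive on ℝⁿ; indeed there exists a curve x : ℝ_{>0} → ℝⁿ with ‖x(t)‖ → +∞ as t → +∞ and f(x(t)) = 0 for all t > 0. -/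
open MvPolynomial Filter

noncomputable section

open scoped Classical

/-- in the boundary cases `c* = −Θ`, or `α*` odd and `|c*| = Θ`, a
circuit polynomial with `r = n − 1` satisfying (C1)-(C3) is not coercive; there even
exists an unbounded curve along which the polynomial vanishes. -/
theorem stmt12 {n r : ℕ} (α : Fin (r + 1) → (Fin n →₀ ℕ)) (c : Fin (r + 1) → ℝ)
    (αs : Fin n →₀ ℕ) (cs : ℝ) (lam : Fin (r + 1) → ℝ)
    (hcirc : IsCircuit α c αs cs lam) (hr : r + 1 = n)
    (hC1 : CondC1 (circuitPoly α c αs cs)) (hC2 : CondC2 (circuitPoly α c αs cs))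
    (hC3 : CondC3 (circuitPoly α c αs cs))
    (heq : cs = -circuitTheta c lam ∨ (¬ IsEvenExp αs ∧ |cs| = circuitTheta c lam)) :
    (¬ Coercive fun x => MvPolynomial.eval x (circuitPoly α c αs cs)) ∧
      ∃ x : ℝ → (Fin n → ℝ), Tendsto (fun t => ‖x t‖) atTop atTop ∧
        ∀ t > (0 : ℝ), MvPolynomial.eval (x t) (circuitPoly α c αs cs) = 0 := by
  obtain ⟨hrn, hnr, hevenα, hcpos, hext, haff, hlampos, hlamsum, hlamcomb⟩ := hcirc
  subst hr
  set f := circuitPoly α c αs cs with hf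
  set Θ := circuitTheta c lam with hΘdef
  have hΘpos : 0 < Θ :=
    Finset.prod_pos fun j _ => Real.rpow_pos_of_pos (div_pos (hcpos j) (hlampos j)) _
  have hcoeff : ∀ β, f.coeff β
      = (∑ j, if α j = β then c j else 0) + (if αs = β then cs else 0) := by
    intro β
    simp [hf, circuitPoly, MvPolynomial.coeff_sum, MvPolynomial.coeff_monomial]
  have hcoeffαs : f.coeff αs = cs := by
    rw [hcoeff, if_pos rfl, Finset.sum_eq_zero (fun j _ => if_neg (fun h => hnr ⟨j, h⟩)),
      zero_add]
  choose k hkpos hkV using hC3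
  have hsingle_ne : ∀ i, Finsupp.single i (2 * k i) ≠ αs := by
    intro i hiα
    rcases heq with hcs | ⟨hodd, _⟩
    · have h2 := hC2 _ (hkV i)
      rw [hiα, hcoeffαs, hcs] at h2
      linarith
    · apply hodd
      intro i'
      have : αs i' = (Finsupp.single i (2 * k i) : Fin (r+1) →₀ ℕ) i' := by rw [hiα]
      rw [this, Finsupp.single_apply]
      split
      · exact even_two_mul _
      · exact Even.zero
  have hrange : ∀ i, ∃ j, α j = Finsupp.single i (2 * k i) := by
    intro i
    by_contra hc
    push_neg at hc
    have h2 := hC2 _ (hkV i)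
    rw [hcoeff, if_neg (fun h => hsingle_ne i h.symm),
      Finset.sum_eq_zero (fun j _ => if_neg (hc j))] at h2
    simp at h2
  choose σ hσ using hrange
  have hσinj : Function.Injective σ := by
    intro i i' h
    by_contra hne
    have hss : Finsupp.single i (2 * k i) = Finsupp.single i' (2 * k i') := by
      rw [← hσ i, ← hσ i', h]
    have h1 := DFunLike.congr_fun hss i
    rw [Finsupp.single_apply, Finsupp.single_apply, if_pos rfl, if_neg (Ne.symm hne)] at h1
    have := hkpos i
    omega
  have hσbij : Function.Bijective σ := Finite.injective_iff_bijective.mp hσinj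
  have hreindex : ∀ F : Fin (r+1) → ℝ, ∑ i, F (σ i) = ∑ j, F j :=
    fun F => Fintype.sum_bijective σ hσbij _ _ (fun i => rfl)
  have hreindexP : ∀ F : Fin (r+1) → ℝ, ∏ i, F (σ i) = ∏ j, F j :=
    fun F => Fintype.prod_bijective σ hσbij _ _ (fun i => rfl)
  set lam' : Fin (r+1) → ℝ := fun i => lam (σ i) with hlam'
  set c' : Fin (r+1) → ℝ := fun i => c (σ i) with hc'
  have hlam'pos : ∀ i, 0 < lam' i := fun i => hlampos _
  have hc'pos : ∀ i, 0 < c' i := fun i => hcpos _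
  have hlam'sum : ∑ i, lam' i = 1 := by
    rw [hlam']; rw [hreindex (fun j => lam j)]; exact hlamsum
  have hΘ' : Θ = ∏ i, (c' i / lam' i) ^ (lam' i) := by
    rw [hΘdef, circuitTheta, ← hreindexP (fun j => (c j / lam j) ^ lam j)]
  have hk0 : ∀ i, ((2 : ℝ) * (k i : ℝ)) ≠ 0 := by
    intro i
    have := hkpos i
    have : (0:ℝ) < (k i : ℝ) := by exact_mod_cast this
    positivity
  have hαseq : ∀ i, (αs i : ℝ) = lam' i * (2 * (k i : ℝ)) := by
    intro i
    have h1 := congrFun hlamcomb i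
    simp only [Finset.sum_apply, Pi.smul_apply, smul_eq_mul, expEmbed] at h1
    rw [← hreindex (fun j => lam j * ((α j) i : ℝ))] at h1
    rw [← h1]
    rw [Finset.sum_eq_single i]
    · rw [hσ i]
      rw [Finsupp.single_apply, if_pos rfl]
      push_cast
      ring
    · intro b _ hb
      rw [hσ b, Finsupp.single_apply, if_neg hb]
      simp
    · simp
  have habs' : cs = Θ ∨ cs = -Θ := by
    rcases heq with h | ⟨_, h⟩
    · exact Or.inr h
    · exact (abs_eq hΘpos.le).mp h
  obtain ⟨ε, hεpm, hεprod⟩ :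
      ∃ ε : Fin (r+1) → ℝ, (∀ i, ε i = 1 ∨ ε i = -1)
        ∧ cs * ∏ i, (ε i) ^ (αs i) = -Θ := by
    rcases habs' with hcs | hcs
    · have hodd : ¬ IsEvenExp αs := by
        rcases heq with h | ⟨ho, _⟩
        · rw [hcs] at h; exfalso; linarith
        · exact ho
      obtain ⟨i₀, hi₀⟩ : ∃ i, ¬ Even (αs i) := by
        by_contra hcon
        push_neg at hcon
        exact hodd hcon
      refine ⟨fun i => if i = i₀ then -1 else 1, fun i => by by_cases h : i = i₀ <;> simp [h], ?_⟩
      have hp : ∏ i, (if i = i₀ then (-1:ℝ) else 1) ^ (αs i) = -1 := by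
        rw [Finset.prod_eq_single i₀]
        · rw [if_pos rfl, Odd.neg_one_pow (Nat.not_even_iff_odd.mp hi₀)]
        · intro b _ hb
          rw [if_neg hb, one_pow]
        · simp
      rw [hp, hcs]
      ring
    · exact ⟨fun _ => 1, fun _ => Or.inl rfl, by simp [hcs]⟩
  set w : Fin (r+1) → ℝ := fun i => 1 / (2 * (k i : ℝ)) with hw
  have hwpos : ∀ i, 0 < w i := by
    intro i
    rw [hw]
    have := hkpos i
    have h2 : (0:ℝ) < (k i : ℝ) := by exact_mod_cast this
    positivity
  have hw2k : ∀ i, w i * ((2 * k i : ℕ) : ℝ) = 1 := by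
    intro i
    rw [hw]
    have hki : (k i : ℝ) ≠ 0 := Nat.cast_ne_zero.mpr (hkpos i).ne'
    push_cast
    field_simp
  set b : Fin (r+1) → ℝ := fun i => lam' i * Θ / c' i with hb
  have hbpos : ∀ i, 0 < b i :=
    fun i => div_pos (mul_pos (hlam'pos i) hΘpos) (hc'pos i)
  set y : Fin (r+1) → ℝ := fun i => ε i * (b i) ^ (w i) with hy
  have hε2 : ∀ i, (ε i) ^ (2 * k i) = 1 := by
    intro i
    rcases hεpm i with h | h <;> rw [h, pow_mul] <;> simp
  have hypow : ∀ i, (y i) ^ (2 * k i) = b i := by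
    intro i
    rw [hy]
    rw [mul_pow, hε2 i, one_mul, ← Real.rpow_natCast ((b i) ^ (w i)) (2 * k i),
      ← Real.rpow_mul (hbpos i).le, hw2k i, Real.rpow_one]
  have hsum1 : ∑ i, c' i * b i = Θ := by
    have h1 : ∀ i, c' i * b i = lam' i * Θ := by
      intro i
      rw [hb]
      field_simp [(hc'pos i).ne']
    rw [Finset.sum_congr rfl (fun i _ => h1 i), ← Finset.sum_mul, hlam'sum, one_mul]
  have prod_rpow_sum : ∀ (x : ℝ), 0 < x → ∀ g : Fin (r+1) → ℝ,
      ∏ i, x ^ g i = x ^ (∑ i, g i) := by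
    intro x hx g
    simp only [Real.rpow_def_of_pos hx]
    rw [Finset.mul_sum, Real.exp_sum]
  have hprodb : ∏ i, (b i) ^ (lam' i) = 1 := by
    have h1 : ∀ i, (b i) ^ (lam' i) = Θ ^ (lam' i) / ((c' i / lam' i) ^ (lam' i)) := by
      intro i
      rw [show b i = Θ / (c' i / lam' i) by rw [hb]; field_simp]
      rw [Real.div_rpow hΘpos.le (div_pos (hc'pos i) (hlam'pos i)).le]
    rw [Finset.prod_congr rfl (fun i _ => h1 i), Finset.prod_div_distrib,
      prod_rpow_sum Θ hΘpos lam', hlam'sum, Real.rpow_one, ← hΘ', div_self hΘpos.ne']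
  have hprodyαs : ∏ i, (y i) ^ (αs i) = ∏ i, (ε i) ^ (αs i) := by
    have h1 : ∀ i, ((b i) ^ (w i)) ^ (αs i) = (b i) ^ (lam' i) := by
      intro i
      rw [← Real.rpow_natCast ((b i) ^ (w i)) (αs i), ← Real.rpow_mul (hbpos i).le]
      congr 1
      rw [hαseq i, hw]
      have hki : (k i : ℝ) ≠ 0 := Nat.cast_ne_zero.mpr (hkpos i).ne'
      field_simp
    calc ∏ i, (y i) ^ (αs i)
        = ∏ i, ((ε i) ^ (αs i) * ((b i) ^ (w i)) ^ (αs i)) := by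
          refine Finset.prod_congr rfl fun i _ => ?_
          rw [hy, mul_pow]
      _ = (∏ i, (ε i) ^ (αs i)) * ∏ i, ((b i) ^ (w i)) ^ (αs i) :=
          Finset.prod_mul_distrib
      _ = (∏ i, (ε i) ^ (αs i)) * 1 := by
          rw [Finset.prod_congr rfl (fun i _ => h1 i), hprodb]
      _ = _ := mul_one _
  have hevalgen : ∀ z : Fin (r+1) → ℝ, MvPolynomial.eval z f
      = (∑ j, c j * ∏ i, z i ^ ((α j) i)) + cs * ∏ i, z i ^ (αs i) := by
    intro z
    simp [hf, circuitPoly, eval_monomial, Finsupp.prod_pow]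
  set x : ℝ → Fin (r+1) → ℝ := fun t i => t ^ (w i) * y i with hx
  have hzero : ∀ t > (0:ℝ), MvPolynomial.eval (x t) f = 0 := by
    intro t ht
    rw [hevalgen]
    rw [← hreindex (fun j => c j * ∏ i', (x t i') ^ ((α j) i'))]
    have hterm : ∀ i, c (σ i) * ∏ i', (x t i') ^ ((α (σ i)) i') = t * (c' i * b i) := by
      intro i
      rw [hσ i]
      have hps : ∏ i', (x t i') ^ ((Finsupp.single i (2 * k i) : Fin (r+1) →₀ ℕ) i')
          = (x t i) ^ (2 * k i) := by
        rw [Finset.prod_eq_single i]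
        · rw [Finsupp.single_apply, if_pos rfl]
        · intro b' _ hb'
          rw [Finsupp.single_apply, if_neg (fun h => hb' h.symm), pow_zero]
        · simp
      rw [hps, hx]
      show c (σ i) * (t ^ (w i) * y i) ^ (2 * k i) = _
      rw [mul_pow, hypow i, ← Real.rpow_natCast (t ^ (w i)) (2 * k i),
        ← Real.rpow_mul ht.le, hw2k i, Real.rpow_one]
      rw [hc']
      ring
    rw [Finset.sum_congr rfl (fun i _ => hterm i), ← Finset.mul_sum, hsum1]
    have h2 : ∏ i, (x t i) ^ (αs i) = t * ∏ i, (ε i) ^ (αs i) := by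
      calc ∏ i, (x t i) ^ (αs i)
          = ∏ i, ((t ^ (w i)) ^ (αs i) * (y i) ^ (αs i)) := by
            refine Finset.prod_congr rfl fun i _ => ?_
            rw [hx]
            show (t ^ (w i) * y i) ^ (αs i) = _
            rw [mul_pow]
        _ = (∏ i, (t ^ (w i)) ^ (αs i)) * ∏ i, (y i) ^ (αs i) :=
            Finset.prod_mul_distrib
        _ = t * ∏ i, (ε i) ^ (αs i) := by
            rw [hprodyαs]
            congr 1
            have h3 : ∀ i, (t ^ (w i)) ^ (αs i) = t ^ (w i * (αs i : ℝ)) := by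
              intro i
              rw [← Real.rpow_natCast (t ^ (w i)) (αs i), ← Real.rpow_mul ht.le]
            rw [Finset.prod_congr rfl (fun i _ => h3 i), prod_rpow_sum t ht]
            have h4 : ∑ i, w i * (αs i : ℝ) = 1 := by
              have h5 : ∀ i, w i * (αs i : ℝ) = lam' i := by
                intro i
                rw [hαseq i, hw]
                have hki : (k i : ℝ) ≠ 0 := Nat.cast_ne_zero.mpr (hkpos i).ne'
                field_simp
              rw [Finset.sum_congr rfl (fun i _ => h5 i), hlam'sum]
            rw [h4, Real.rpow_one]
    rw [h2]
    have h6 : t * Θ + cs * (t * ∏ i, (ε i) ^ (αs i))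
        = t * (Θ + cs * ∏ i, (ε i) ^ (αs i)) := by ring
    rw [h6, hεprod]
    ring
  have hy0ne : y 0 ≠ 0 := by
    rw [hy]
    refine mul_ne_zero ?_ (Real.rpow_pos_of_pos (hbpos 0) _).ne'
    rcases hεpm 0 with h | h <;> rw [h] <;> norm_num
  have hnormt : Tendsto (fun t => ‖x t‖) atTop atTop := by
    have h1 : Tendsto (fun t : ℝ => t ^ (w 0) * |y 0|) atTop atTop :=
      (tendsto_rpow_atTop (hwpos 0)).atTop_mul_const (abs_pos.mpr hy0ne)
    apply tendsto_atTop_mono' atTop ?_ h1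
    filter_upwards [eventually_ge_atTop (0:ℝ)] with t ht
    calc t ^ (w 0) * |y 0| = |x t 0| := by
          rw [hx]
          show _ = |t ^ (w 0) * y 0|
          conv_rhs => rw [abs_mul]
          rw [abs_of_nonneg (Real.rpow_nonneg ht _)]
      _ ≤ ‖x t‖ := by simpa using norm_le_pi_norm (x t) 0
  refine ⟨?_, x, hnormt, hzero⟩
  intro hco
  have hxc : Tendsto x atTop (comap (fun z : Fin (r+1) → ℝ => ‖z‖) atTop) :=
    tendsto_comap_iff.mpr hnormt
  have h2 : Tendsto (fun t => MvPolynomial.eval (x t) f) atTop atTop := hco.comp hxc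
  have h3 := (h2.eventually (eventually_ge_atTop (1:ℝ))).and (eventually_gt_atTop (0:ℝ))
  obtain ⟨t, h4, h5⟩ := h3.exists
  rw [hzero t h5] at h4
  linarith

end
end

section
/- Let a, b, c ∈ ℝ and consider the bivariate polynomial f(x,y) = a·x⁴ + b·x³y + c·y⁴. Then f is coercive on ℝ², i.e. f(x,y) → +∞ as ‖(x,y)‖ → +∞, if and only if a > 0, c > 0 and |b| < 4·3^{−3/4}·a^{3/4}·c^{1/4}. -/
open Filter

/-- `g` is coercive on `ℝ²`: `g(x,y) → +∞` whenever `‖(x,y)‖ → +∞`. -/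
def Coercive2 (g : ℝ × ℝ → ℝ) : Prop :=
  Tendsto g (comap (fun p : ℝ × ℝ => ‖p‖) atTop) atTop

/-- Key nonnegativity: if `27 b⁴ ≤ 256 a³ c` and `a > 0` then the quartic form is
nonnegative (via the SOS identity
`256 a³ f = (4ax+3by)²((4ax-by)²+2b²y²) + (256a³c-27b⁴) y⁴`). -/
lemma stmt15_keyA (a b c x y : ℝ) (ha : 0 < a) (h : 27*b^4 ≤ 256*a^3*c) :
    0 ≤ a*x^4 + b*x^3*y + c*y^4 := by
  have h1 : 0 ≤ (4*a*x+3*b*y)^2 * ((4*a*x-b*y)^2 + 2*(b*y)^2) := by positivity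
  have h2 : 0 ≤ (256*a^3*c - 27*b^4) * y^4 :=
    mul_nonneg (by linarith) (by positivity)
  have ha3 : 0 < a^3 := by positivity
  nlinarith [h1, h2, ha3]

/-- Uniform lower bound `f(x,y) ≥ ε‖(x,y)‖⁴` under the strict condition. -/
lemma stmt15_lowerBound (a b c : ℝ) (ha : 0 < a) (hc : 0 < c) (h : 27*b^4 < 256*a^3*c) :
    ∃ ε > 0, ∀ x y : ℝ, ε * (max |x| |y|)^4 ≤ a*x^4 + b*x^3*y + c*y^4 := by
  set D : ℝ := 256*a^3*c - 27*b^4 with hD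
  have hDpos : 0 < D := by linarith
  set ε : ℝ := min (min (a/2) (D/(768*a^2*c))) (D/(256*a^3)) with hε
  have hεpos : 0 < ε :=
    lt_min (lt_min (by positivity) (by positivity)) (by positivity)
  refine ⟨ε, hεpos, ?_⟩
  intro x y
  have hε1 : ε ≤ a/2 := le_trans (min_le_left _ _) (min_le_left _ _)
  have hε2 : ε ≤ D/(768*a^2*c) := le_trans (min_le_left _ _) (min_le_right _ _)
  have hε3 : ε ≤ D/(256*a^3) := min_le_right _ _
  have hε2' : ε * (768*a^2*c) ≤ D := (le_div_iff₀ (by positivity)).mp hε2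
  have hε3' : ε * (256*a^3) ≤ D := (le_div_iff₀ (by positivity)).mp hε3
  have haε : 0 < a - ε := by linarith
  have hcube : 27*b^4 ≤ 256*(a-ε)^3*c := by
    have key : 0 ≤ 256*c*ε^2*(3*a-ε) :=
      mul_nonneg (by positivity) (by linarith)
    nlinarith [key]
  have hx4 : ε * x^4 ≤ a*x^4 + b*x^3*y + c*y^4 := by
    have := stmt15_keyA (a-ε) b c x y haε hcube
    nlinarith [this]
  have hy4 : ε * y^4 ≤ a*x^4 + b*x^3*y + c*y^4 := by
    have hcε : 27*b^4 ≤ 256*a^3*(c-ε) := by nlinarith [hε3']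
    have := stmt15_keyA a b (c-ε) x y ha hcε
    nlinarith [this]
  rcases max_cases |x| |y| with ⟨hm, _⟩ | ⟨hm, _⟩ <;> rw [hm]
  · have : |x|^4 = x^4 := by rw [← abs_pow]; exact abs_of_nonneg (by positivity)
    rw [this]; exact hx4
  · have : |y|^4 = y^4 := by rw [← abs_pow]; exact abs_of_nonneg (by positivity)
    rw [this]; exact hy4

/-- The rpow condition is equivalent to the polynomial condition `27 b⁴ < 256 a³ c`. -/
lemma stmt15_cond_iff (a b c : ℝ) (ha : 0 < a) (hc : 0 < c) :
    (|b| < 4 * (3 : ℝ) ^ (-(3 : ℝ) / 4) * a ^ ((3 : ℝ) / 4) * c ^ ((1 : ℝ) / 4)) ↔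
      27*b^4 < 256*a^3*c := by
  set K : ℝ := 4 * (3 : ℝ) ^ (-(3 : ℝ) / 4) * a ^ ((3 : ℝ) / 4) * c ^ ((1 : ℝ) / 4) with hK
  have hKpos : 0 ≤ K := by positivity
  have h4 : (|b| < K) ↔ |b|^4 < K^4 :=
    (pow_lt_pow_iff_left₀ (abs_nonneg b) hKpos (by norm_num)).symm
  have hb4 : |b|^4 = b^4 := by rw [← abs_pow]; exact abs_of_nonneg (by positivity)
  have hK4 : K^4 = 256/27 * (a^3*c) := by
    rw [hK]
    rw [mul_pow, mul_pow, mul_pow]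
    rw [← Real.rpow_natCast ((3:ℝ) ^ (-(3:ℝ)/4)) 4, ← Real.rpow_natCast (a ^ ((3:ℝ)/4)) 4,
      ← Real.rpow_natCast (c ^ ((1:ℝ)/4)) 4,
      ← Real.rpow_mul (by norm_num : (0:ℝ) ≤ 3), ← Real.rpow_mul ha.le, ← Real.rpow_mul hc.le]
    norm_num
    ring
  rw [h4, hb4, hK4]
  constructor <;> intro h <;> linarith

/-- characterization of coercivity of `f(x,y) = a x⁴ + b x³ y + c y⁴`. -/
theorem stmt15 (a b c : ℝ) :
    Coercive2 (fun p : ℝ × ℝ => a * p.1 ^ 4 + b * p.1 ^ 3 * p.2 + c * p.2 ^ 4) ↔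
      (0 < a ∧ 0 < c ∧
        |b| < 4 * (3 : ℝ) ^ (-(3 : ℝ) / 4) * a ^ ((3 : ℝ) / 4) * c ^ ((1 : ℝ) / 4)) := by
  constructor
  · intro hco
    -- coercivity forces positivity at every nonzero point
    have key : ∀ p : ℝ × ℝ, p ≠ 0 → 0 < a * p.1 ^ 4 + b * p.1 ^ 3 * p.2 + c * p.2 ^ 4 := by
      intro p hp
      by_contra hle
      push_neg at hle
      have hnp : 0 < ‖p‖ := norm_pos_iff.mpr hp
      have hφ : Tendsto (fun t : ℝ => t • p) atTop
          (comap (fun p : ℝ × ℝ => ‖p‖) atTop) := by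
        rw [tendsto_comap_iff]
        have heq : ((fun q : ℝ × ℝ => ‖q‖) ∘ fun t : ℝ => t • p) = fun t => |t| * ‖p‖ := by
          ext t; simp [norm_smul]
        rw [heq]
        exact tendsto_abs_atTop_atTop.atTop_mul_const hnp
      have hcomp := hco.comp hφ
      have heq2 : ((fun q : ℝ × ℝ => a * q.1 ^ 4 + b * q.1 ^ 3 * q.2 + c * q.2 ^ 4) ∘
          fun t : ℝ => t • p) =
          fun t : ℝ => t^4 * (a * p.1 ^ 4 + b * p.1 ^ 3 * p.2 + c * p.2 ^ 4) := by
        ext t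
        simp only [Function.comp_apply, Prod.smul_fst, Prod.smul_snd, smul_eq_mul]
        ring
      rw [heq2] at hcomp
      obtain ⟨t, ht1, ht0⟩ :=
        ((hcomp.eventually_ge_atTop 1).and (eventually_ge_atTop (0:ℝ))).exists
      nlinarith [pow_nonneg ht0 4, mul_nonpos_of_nonneg_of_nonpos (pow_nonneg ht0 4) hle]
    have ha : 0 < a := by
      have := key (1, 0) (by simp [Prod.ext_iff])
      simpa using this
    have hc : 0 < c := by
      have := key (0, 1) (by simp [Prod.ext_iff])
      simpa using this
    have hb : 27*b^4 < 256*a^3*c := by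
      have h4a : ((-3*b : ℝ), (4*a : ℝ)) ≠ 0 := by
        simp only [Prod.ext_iff, Prod.fst_zero, Prod.snd_zero, ne_eq, not_and]
        intro _
        nlinarith [ha]
      have := key ((-3*b : ℝ), (4*a : ℝ)) h4a
      simp only at this
      nlinarith [this, ha, mul_pos ha ha]
    exact ⟨ha, hc, (stmt15_cond_iff a b c ha hc).mpr hb⟩
  · rintro ⟨ha, hc, hb⟩
    have hb' : 27*b^4 < 256*a^3*c := (stmt15_cond_iff a b c ha hc).mp hb
    obtain ⟨ε, hε, hbd⟩ := stmt15_lowerBound a b c ha hc hb'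
    have h1 : Tendsto (fun p : ℝ × ℝ => ε * ‖p‖^4)
        (comap (fun p : ℝ × ℝ => ‖p‖) atTop) atTop := by
      have h2 : Tendsto (fun t : ℝ => ε * t^4) atTop atTop :=
        (tendsto_pow_atTop (by norm_num : (4:ℕ) ≠ 0)).const_mul_atTop hε
      exact h2.comp tendsto_comap
    apply tendsto_atTop_mono _ h1
    intro p
    have hnorm : ‖p‖ = max |p.1| |p.2| := by
      rw [Prod.norm_def, Real.norm_eq_abs, Real.norm_eq_abs]
    rw [hnorm]
    exact hbd p.1 p.2
end

section
/- Let a, b, c ∈ ℝ with a > 0, c > 0 and |b| < min{(4/3)·a, 4·c}. Then the bivariate polynomial f(x,y) = a·x⁴ + b·x³y + c·y⁴ is coercive on ℝ². -/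
open Filter

/-- `f(x,y) = a x⁴ + b x³ y + c y⁴` is coercive on `ℝ²` whenever
`a > 0`, `c > 0` and `|b| < min {(4/3) a, 4 c}`. -/
theorem stmt16 (a b c : ℝ) (ha : 0 < a) (hc : 0 < c)
    (hb : |b| < min ((4 / 3) * a) (4 * c)) :
    Coercive2 (fun p : ℝ × ℝ => a * p.1 ^ 4 + b * p.1 ^ 3 * p.2 + c * p.2 ^ 4) := by
  have hb1 : |b| < (4 / 3) * a := lt_of_lt_of_le hb (min_le_left _ _)
  have hb2 : |b| < 4 * c := lt_of_lt_of_le hb (min_le_right _ _)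
  set ε : ℝ := min (a - 3 / 4 * |b|) (c - 1 / 4 * |b|) with hε_def
  have hε : 0 < ε := by
    apply lt_min <;> linarith
  have key : ∀ p : ℝ × ℝ, ε * ‖p‖ ^ 4 ≤
      a * p.1 ^ 4 + b * p.1 ^ 3 * p.2 + c * p.2 ^ 4 := by
    rintro ⟨x, y⟩
    have hn : ‖(x, y)‖ = max |x| |y| := by
      simp [Prod.norm_def, Real.norm_eq_abs]
    have hx : (0:ℝ) ≤ |x| := abs_nonneg x
    have hy : (0:ℝ) ≤ |y| := abs_nonneg y
    have hx4 : (0:ℝ) ≤ x ^ 4 := by positivity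
    have hy4 : (0:ℝ) ≤ y ^ 4 := by positivity
    have ex : |x| ^ 4 = x ^ 4 := by rw [← abs_pow, abs_of_nonneg hx4]
    have ey : |y| ^ 4 = y ^ 4 := by rw [← abs_pow, abs_of_nonneg hy4]
    have h1 : ‖(x, y)‖ ^ 4 ≤ x ^ 4 + y ^ 4 := by
      rw [hn]
      rcases max_cases |x| |y| with ⟨h, _⟩ | ⟨h, _⟩ <;> rw [h]
      · rw [ex]; linarith
      · rw [ey]; linarith
    have hεsum : ε * (x ^ 4 + y ^ 4) ≤
        (a - 3 / 4 * |b|) * x ^ 4 + (c - 1 / 4 * |b|) * y ^ 4 := by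
      have e1 : ε ≤ a - 3 / 4 * |b| := min_le_left _ _
      have e2 : ε ≤ c - 1 / 4 * |b| := min_le_right _ _
      nlinarith [mul_le_mul_of_nonneg_right e1 hx4, mul_le_mul_of_nonneg_right e2 hy4]
    have hamgm : |b * x ^ 3 * y| ≤ |b| * (3 * x ^ 4 + y ^ 4) / 4 := by
      rw [abs_mul, abs_mul, abs_pow, ← ex, ← ey]
      have h3 : 4 * (|x| ^ 3 * |y|) ≤ 3 * |x| ^ 4 + |y| ^ 4 := by
        nlinarith [sq_nonneg (|x| - |y|), mul_nonneg hx hy, sq_nonneg |x|,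
          mul_nonneg (mul_nonneg hx hx) hy,
          mul_nonneg (mul_nonneg (mul_nonneg hx hx) hx) hy]
      nlinarith [mul_le_mul_of_nonneg_left h3 (abs_nonneg b)]
    have hcross : -( |b| * (3 * x ^ 4 + y ^ 4) / 4) ≤ b * x ^ 3 * y := by
      have := neg_abs_le (b * x ^ 3 * y)
      linarith
    have hεn : ε * ‖(x, y)‖ ^ 4 ≤ ε * (x ^ 4 + y ^ 4) :=
      mul_le_mul_of_nonneg_left h1 hε.le
    calc ε * ‖(x, y)‖ ^ 4 ≤ ε * (x ^ 4 + y ^ 4) := hεn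
      _ ≤ (a - 3 / 4 * |b|) * x ^ 4 + (c - 1 / 4 * |b|) * y ^ 4 := hεsum
      _ ≤ a * x ^ 4 + b * x ^ 3 * y + c * y ^ 4 := by linarith
  have hlim : Tendsto (fun p : ℝ × ℝ => ε * ‖p‖ ^ 4)
      (comap (fun p : ℝ × ℝ => ‖p‖) atTop) atTop := by
    have h2 : Tendsto (fun t : ℝ => ε * t ^ 4) atTop atTop :=
      (tendsto_pow_atTop (by norm_num)).const_mul_atTop hε
    exact h2.comp tendsto_comap
  exact tendsto_atTop_mono key hlim
end

section
/- Let a, b ∈ ℝ with |a| + |b| < 4·3^{−3/4}. Then the bivariate polynomial g(x,y) = x⁴ + a·x³y + b·xy³ + y⁴ is coercive on ℝ². -/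
open Filter

lemma stmt17_key (x y : ℝ) : |x ^ 3 * y| ≤ (3 : ℝ) ^ ((3 : ℝ) / 4) / 4 * (x ^ 4 + y ^ 4) := by
  have h3 : (0 : ℝ) < (3 : ℝ) ^ ((3 : ℝ) / 4) := Real.rpow_pos_of_pos (by norm_num) _
  have hxy : (0 : ℝ) ≤ x ^ 4 + y ^ 4 := by positivity
  have hR : (0 : ℝ) ≤ (3 : ℝ) ^ ((3 : ℝ) / 4) / 4 * (x ^ 4 + y ^ 4) := by positivity
  have hpow : ((3 : ℝ) ^ ((3 : ℝ) / 4)) ^ (4 : ℕ) = 27 := by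
    rw [← Real.rpow_natCast ((3 : ℝ) ^ ((3 : ℝ) / 4)) 4, ← Real.rpow_mul (by norm_num)]
    norm_num
  have h4 : |x ^ 3 * y| ^ 4 ≤ ((3 : ℝ) ^ ((3 : ℝ) / 4) / 4 * (x ^ 4 + y ^ 4)) ^ 4 := by
    have : |x ^ 3 * y| ^ 4 = x ^ 12 * y ^ 4 := by
      rw [← abs_pow]
      rw [abs_of_nonneg (by positivity : (0:ℝ) ≤ (x ^ 3 * y) ^ 4)]
      ring
    rw [this, mul_pow, div_pow, hpow]
    have : x ^ 12 * y ^ 4 ≤ 27 / 256 * (x ^ 4 + y ^ 4) ^ 4 := by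
      nlinarith [sq_nonneg (x ^ 4 - 3 * y ^ 4), sq_nonneg (x ^ 4 + y ^ 4), sq_nonneg x,
        sq_nonneg y, sq_nonneg (x * y), sq_nonneg (x ^ 4 - y ^ 4), pow_two_nonneg (x^2*y^2),
        sq_nonneg (x ^ 8 - 3 * x^4 * y ^ 4)]
    calc x ^ 12 * y ^ 4 ≤ 27 / 256 * (x ^ 4 + y ^ 4) ^ 4 := this
      _ = 27 / 4 ^ 4 * (x ^ 4 + y ^ 4) ^ 4 := by norm_num
  exact le_of_pow_le_pow_left₀ (by norm_num) hR h4

/-- `g(x,y) = x⁴ + a x³ y + b x y³ + y⁴` is coercive on `ℝ²` whenever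
`|a| + |b| < 4 · 3^(−3/4)`. -/
theorem stmt17 (a b : ℝ) (hab : |a| + |b| < 4 * (3 : ℝ) ^ (-(3 : ℝ) / 4)) :
    Coercive2 (fun p : ℝ × ℝ =>
      p.1 ^ 4 + a * p.1 ^ 3 * p.2 + b * p.1 * p.2 ^ 3 + p.2 ^ 4) := by
  set K : ℝ := (3 : ℝ) ^ ((3 : ℝ) / 4) / 4 with hKdef
  have hK : 0 < K := by
    have := Real.rpow_pos_of_pos (show (0:ℝ) < 3 by norm_num) ((3 : ℝ) / 4)
    positivity
  have hinv : 4 * (3 : ℝ) ^ (-(3 : ℝ) / 4) = 1 / K := by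
    rw [hKdef]
    rw [show -(3 : ℝ) / 4 = -((3:ℝ)/4) by ring, Real.rpow_neg (by norm_num)]
    field_simp
  have hc : 0 < 1 - (|a| + |b|) * K := by
    have h1 : (|a| + |b|) * K < (1 / K) * K := by
      apply mul_lt_mul_of_pos_right _ hK
      rw [← hinv]; exact hab
    rw [one_div, inv_mul_cancel₀ (ne_of_gt hK)] at h1
    linarith
  set c : ℝ := 1 - (|a| + |b|) * K with hcdef
  -- pointwise lower bound
  have hbound : ∀ p : ℝ × ℝ, c * ‖p‖ ^ 4 ≤
      p.1 ^ 4 + a * p.1 ^ 3 * p.2 + b * p.1 * p.2 ^ 3 + p.2 ^ 4 := by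
    intro ⟨x, y⟩
    have hnorm : ‖((x, y) : ℝ × ℝ)‖ ^ 4 ≤ x ^ 4 + y ^ 4 := by
      have : ‖((x, y) : ℝ × ℝ)‖ = max ‖x‖ ‖y‖ := rfl
      rw [this]
      rcases max_cases ‖x‖ ‖y‖ with ⟨h, _⟩ | ⟨h, _⟩ <;> rw [h] <;>
        simp only [Real.norm_eq_abs] <;>
        [skip; skip] <;>
        · rw [← abs_pow] at *
          nlinarith [abs_nonneg (x^4), abs_nonneg (y^4), sq_nonneg x, sq_nonneg y,
            abs_of_nonneg (show (0:ℝ) ≤ x^4 by positivity),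
            abs_of_nonneg (show (0:ℝ) ≤ y^4 by positivity)]
    have key1 : |x ^ 3 * y| ≤ K * (x ^ 4 + y ^ 4) := stmt17_key x y
    have key2 : |x * y ^ 3| ≤ K * (x ^ 4 + y ^ 4) := by
      have := stmt17_key y x
      calc |x * y ^ 3| = |y ^ 3 * x| := by rw [mul_comm]
        _ ≤ K * (y ^ 4 + x ^ 4) := this
        _ = K * (x ^ 4 + y ^ 4) := by ring
    have ha1 : a * x ^ 3 * y ≥ -(|a| * (K * (x ^ 4 + y ^ 4))) := by
      have : |a * x ^ 3 * y| ≤ |a| * (K * (x ^ 4 + y ^ 4)) := by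
        rw [mul_assoc, abs_mul]
        exact mul_le_mul_of_nonneg_left key1 (abs_nonneg a)
      linarith [neg_abs_le (a * x ^ 3 * y)]
    have hb1 : b * x * y ^ 3 ≥ -(|b| * (K * (x ^ 4 + y ^ 4))) := by
      have : |b * x * y ^ 3| ≤ |b| * (K * (x ^ 4 + y ^ 4)) := by
        rw [mul_assoc, abs_mul]
        exact mul_le_mul_of_nonneg_left key2 (abs_nonneg b)
      linarith [neg_abs_le (b * x * y ^ 3)]
    have h1 : c * (x ^ 4 + y ^ 4) ≤
        x ^ 4 + a * x ^ 3 * y + b * x * y ^ 3 + y ^ 4 := by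
      rw [hcdef]; nlinarith
    have h0 : (0:ℝ) ≤ ‖((x, y) : ℝ × ℝ)‖ := norm_nonneg _
    calc c * ‖((x, y) : ℝ × ℝ)‖ ^ 4 ≤ c * (x ^ 4 + y ^ 4) := by
          apply mul_le_mul_of_nonneg_left hnorm (le_of_lt hc)
      _ ≤ _ := h1
  have hlow : Tendsto (fun p : ℝ × ℝ => c * ‖p‖ ^ 4)
      (comap (fun p : ℝ × ℝ => ‖p‖) atTop) atTop := by
    have h1 : Tendsto (fun p : ℝ × ℝ => ‖p‖)
        (comap (fun p : ℝ × ℝ => ‖p‖) atTop) atTop := tendsto_comap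
    have h2 : Tendsto (fun t : ℝ => c * t ^ 4) atTop atTop :=
      (tendsto_pow_atTop (by norm_num)).const_mul_atTop hc
    exact h2.comp h1
  exact tendsto_atTop_mono hbound hlow
end

section
/- Let a, b ∈ ℝ with 3·|a| + |b| < 4 and |a| + 3·|b| < 4. Then the bivariate polynomial g(x,y) = x⁴ + a·x³y + b·xy³ + y⁴ is coercive on ℝ². -/
open Filter

lemma aux_amgm (u v : ℝ) (hu : 0 ≤ u) (hv : 0 ≤ v) : 4 * (u ^ 3 * v) ≤ 3 * u ^ 4 + v ^ 4 := by
  nlinarith [sq_nonneg (u - v), sq_nonneg (u + v), sq_nonneg u, sq_nonneg v, mul_nonneg hu hv,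
    mul_nonneg (mul_nonneg hu hu) (mul_nonneg hv hv)]

lemma aux_lower (a b : ℝ) (h1 : 3 * |a| + |b| < 4) (h2 : |a| + 3 * |b| < 4) (x y : ℝ) :
    min (1 - (3 * |a| + |b|) / 4) (1 - (|a| + 3 * |b|) / 4) * (x ^ 4 + y ^ 4) ≤
      x ^ 4 + a * x ^ 3 * y + b * x * y ^ 3 + y ^ 4 := by
  set c := min (1 - (3 * |a| + |b|) / 4) (1 - (|a| + 3 * |b|) / 4) with hc
  have hx4 : (0:ℝ) ≤ x ^ 4 := by positivity
  have hy4 : (0:ℝ) ≤ y ^ 4 := by positivity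
  have ex : |x| ^ 4 = x ^ 4 := by rw [← abs_pow]; exact abs_of_nonneg (by positivity)
  have ey : |y| ^ 4 = y ^ 4 := by rw [← abs_pow]; exact abs_of_nonneg (by positivity)
  have hxy1 : 4 * (|x| ^ 3 * |y|) ≤ 3 * x ^ 4 + y ^ 4 := by
    have := aux_amgm |x| |y| (abs_nonneg x) (abs_nonneg y); linarith [ex, ey]
  have hxy2 : 4 * (|y| ^ 3 * |x|) ≤ 3 * y ^ 4 + x ^ 4 := by
    have := aux_amgm |y| |x| (abs_nonneg y) (abs_nonneg x); linarith [ex, ey]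
  have ha : a * x ^ 3 * y ≥ -(|a| * (|x| ^ 3 * |y|)) := by
    have h := neg_abs_le (a * x ^ 3 * y)
    have : |a * x ^ 3 * y| = |a| * (|x| ^ 3 * |y|) := by
      rw [abs_mul, abs_mul, abs_pow]; ring
    linarith [h, this.le, this.ge]
  have hb : b * x * y ^ 3 ≥ -(|b| * (|y| ^ 3 * |x|)) := by
    have h := neg_abs_le (b * x * y ^ 3)
    have : |b * x * y ^ 3| = |b| * (|y| ^ 3 * |x|) := by
      rw [abs_mul, abs_mul, abs_pow]; ring
    linarith [h, this.le, this.ge]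
  have hc1 : c ≤ 1 - (3 * |a| + |b|) / 4 := min_le_left _ _
  have hc2 : c ≤ 1 - (|a| + 3 * |b|) / 4 := min_le_right _ _
  have hA : 0 ≤ |a| := abs_nonneg a
  have hB : 0 ≤ |b| := abs_nonneg b
  nlinarith [mul_nonneg hA (sub_nonneg.2 hxy1), mul_le_mul_of_nonneg_left hxy1 hA,
    mul_le_mul_of_nonneg_left hxy2 hB, mul_le_mul_of_nonneg_right hc1 hx4,
    mul_le_mul_of_nonneg_right hc2 hy4]

/-- `g(x,y) = x⁴ + a x³ y + b x y³ + y⁴` is coercive on `ℝ²` whenever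
`3|a| + |b| < 4` and `|a| + 3|b| < 4`. -/
theorem stmt18 (a b : ℝ) (h1 : 3 * |a| + |b| < 4) (h2 : |a| + 3 * |b| < 4) :
    Coercive2 (fun p : ℝ × ℝ =>
      p.1 ^ 4 + a * p.1 ^ 3 * p.2 + b * p.1 * p.2 ^ 3 + p.2 ^ 4) := by
  set c := min (1 - (3 * |a| + |b|) / 4) (1 - (|a| + 3 * |b|) / 4) with hc
  have hcpos : 0 < c := by
    apply lt_min <;> linarith
  have key : ∀ p : ℝ × ℝ, c * ‖p‖ ^ 4 ≤
      p.1 ^ 4 + a * p.1 ^ 3 * p.2 + b * p.1 * p.2 ^ 3 + p.2 ^ 4 := by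
    intro ⟨x, y⟩
    have hnorm : ‖(x, y)‖ ^ 4 ≤ x ^ 4 + y ^ 4 := by
      have h : ‖(x, y)‖ = max ‖x‖ ‖y‖ := rfl
      rcases max_cases ‖x‖ ‖y‖ with ⟨hm, _⟩ | ⟨hm, _⟩ <;>
        · rw [h, hm]
          simp only [Real.norm_eq_abs]
          rw [← abs_pow, abs_of_nonneg (by positivity : (0:ℝ) ≤ _)]
          nlinarith [sq_nonneg (x^2), sq_nonneg (y^2)]
    calc c * ‖(x, y)‖ ^ 4 ≤ c * (x ^ 4 + y ^ 4) :=
          mul_le_mul_of_nonneg_left hnorm hcpos.le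
      _ ≤ _ := aux_lower a b h1 h2 x y
  have hnorm_tendsto : Tendsto (fun p : ℝ × ℝ => ‖p‖)
      (comap (fun p : ℝ × ℝ => ‖p‖) atTop) atTop := tendsto_comap
  have hpow : Tendsto (fun t : ℝ => c * t ^ 4) atTop atTop :=
    (tendsto_pow_atTop (by norm_num)).const_mul_atTop hcpos
  exact tendsto_atTop_mono key (hpow.comp hnorm_tendsto)
end
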